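/- arXiv:0910.0067 — 7 statements merged into one kernel-verified Lean document; each statement's English description precedes it below -/
import Mathlib

section
/- Let (Ω, F, P) be a probability space and let {A_n}_{n=1}^∞ be a sequence of events. Let {w_n}_{n=1}^∞ be a sequence of real numbers (possibly negative) such that lim_{m→∞} Σ_{n=1}^m w_n P(A_n) = ∞. Then P(limsup_n A_n) ≥ limsup_{n→∞} (Σ_{k=1}^n w_k P(A_k))² / (Σ_{i=1}^n Σ_{j=1}^n w_i w_j P(A_i ∩ A_j)). -/
open MeasureTheory Filter Finset
open Topology

section Aux

variable {Ω : Type*} [MeasurableSpace Ω] {μ : Measure Ω}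

private lemma wbc_memLp_of_bdd [IsFiniteMeasure μ] {f : Ω → ℝ} (hm : Measurable f)
    (C : ℝ) (hC : ∀ ω, |f ω| ≤ C) (p : ENNReal) : MemLp f p μ :=
  (memLp_top_of_bound hm.aestronglyMeasurable C
    (Filter.Eventually.of_forall fun ω => by simpa using hC ω)).mono_exponent le_top

/-- Cauchy–Schwarz for integrals, in product form. -/
private lemma wbc_cs {f g : Ω → ℝ} (hf : MemLp f 2 μ) (hg : MemLp g 2 μ) :
    (∫ ω, f ω * g ω ∂μ) ^ 2 ≤ (∫ ω, f ω * f ω ∂μ) * (∫ ω, g ω * g ω ∂μ) := by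
  have hpq : Real.HolderConjugate 2 2 := Real.holderConjugate_iff.mpr ⟨one_lt_two, by norm_num⟩
  have h2 : ENNReal.ofReal (2 : ℝ) = 2 := by norm_num
  have key := integral_mul_norm_le_Lp_mul_Lq (μ := μ) hpq (h2 ▸ hf) (h2 ▸ hg)
  have hXf : ∫ ω, ‖f ω‖ ^ (2:ℝ) ∂μ = ∫ ω, f ω * f ω ∂μ := by
    refine integral_congr_ae (Filter.Eventually.of_forall fun ω => ?_)
    show ‖f ω‖ ^ (2:ℝ) = f ω * f ω
    rw [show (2:ℝ) = ((2:ℕ):ℝ) by norm_num, Real.rpow_natCast, Real.norm_eq_abs]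
    rw [pow_two, abs_mul_abs_self]
  have hXg : ∫ ω, ‖g ω‖ ^ (2:ℝ) ∂μ = ∫ ω, g ω * g ω ∂μ := by
    refine integral_congr_ae (Filter.Eventually.of_forall fun ω => ?_)
    show ‖g ω‖ ^ (2:ℝ) = g ω * g ω
    rw [show (2:ℝ) = ((2:ℕ):ℝ) by norm_num, Real.rpow_natCast, Real.norm_eq_abs]
    rw [pow_two, abs_mul_abs_self]
  rw [hXf, hXg] at key
  have hX0 : 0 ≤ ∫ ω, f ω * f ω ∂μ := integral_nonneg fun ω => mul_self_nonneg _
  have hY0 : 0 ≤ ∫ ω, g ω * g ω ∂μ := integral_nonneg fun ω => mul_self_nonneg _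
  have habs : |∫ ω, f ω * g ω ∂μ| ≤ ∫ ω, ‖f ω‖ * ‖g ω‖ ∂μ := by
    rw [← Real.norm_eq_abs]
    refine (norm_integral_le_integral_norm (fun ω => f ω * g ω)).trans (le_of_eq ?_)
    refine integral_congr_ae (Filter.Eventually.of_forall fun ω => ?_)
    show ‖f ω * g ω‖ = ‖f ω‖ * ‖g ω‖
    rw [norm_mul]
  have hsq : ((∫ ω, f ω * f ω ∂μ) ^ ((1:ℝ)/2) * (∫ ω, g ω * g ω ∂μ) ^ ((1:ℝ)/2)) ^ 2
      = (∫ ω, f ω * f ω ∂μ) * (∫ ω, g ω * g ω ∂μ) := by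
    rw [mul_pow, ← Real.rpow_natCast (_ ^ ((1:ℝ)/2)) 2, ← Real.rpow_natCast (_ ^ ((1:ℝ)/2)) 2,
      ← Real.rpow_mul hX0, ← Real.rpow_mul hY0]
    norm_num
  calc (∫ ω, f ω * g ω ∂μ) ^ 2 = |∫ ω, f ω * g ω ∂μ| ^ 2 := (sq_abs _).symm
    _ ≤ ((∫ ω, f ω * f ω ∂μ) ^ ((1:ℝ)/2) * (∫ ω, g ω * g ω ∂μ) ^ ((1:ℝ)/2)) ^ 2 := by
        refine pow_le_pow_left₀ (abs_nonneg _) (habs.trans key) 2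
    _ = _ := hsq

section SF

variable {A : ℕ → Set Ω} {w : ℕ → ℝ}

private lemma wbc_meas (hA : ∀ n, MeasurableSet (A n)) (s : Finset ℕ) :
    Measurable (fun ω => ∑ k ∈ s, w k * (A k).indicator (1 : Ω → ℝ) ω) := by
  refine Finset.measurable_sum s fun k _ => ?_
  exact (measurable_const.indicator (hA k)).const_mul _

private lemma wbc_bdd (s : Finset ℕ) (ω : Ω) :
    |∑ k ∈ s, w k * (A k).indicator (1 : Ω → ℝ) ω| ≤ ∑ k ∈ s, |w k| := by
  refine (Finset.abs_sum_le_sum_abs _ _).trans (Finset.sum_le_sum fun k _ => ?_)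
  rw [abs_mul]
  have h1 : |(A k).indicator (1 : Ω → ℝ) ω| ≤ 1 := by
    by_cases h : ω ∈ A k <;> simp [Set.indicator_of_mem, Set.indicator_of_notMem, h]
  calc |w k| * |(A k).indicator (1 : Ω → ℝ) ω| ≤ |w k| * 1 :=
        mul_le_mul_of_nonneg_left h1 (abs_nonneg _)
    _ = |w k| := mul_one _

private lemma wbc_memLp [IsFiniteMeasure μ] (hA : ∀ n, MeasurableSet (A n)) (s : Finset ℕ)
    (p : ENNReal) : MemLp (fun ω => ∑ k ∈ s, w k * (A k).indicator (1 : Ω → ℝ) ω) p μ :=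
  wbc_memLp_of_bdd (wbc_meas hA s) _ (wbc_bdd s) p

private lemma wbc_int_mul [IsFiniteMeasure μ] (hA : ∀ n, MeasurableSet (A n)) (s t : Finset ℕ) :
    Integrable (fun ω => (∑ k ∈ s, w k * (A k).indicator (1 : Ω → ℝ) ω) *
      (∑ k ∈ t, w k * (A k).indicator (1 : Ω → ℝ) ω)) μ := by
  refine memLp_one_iff_integrable.mp (wbc_memLp_of_bdd ((wbc_meas hA s).mul (wbc_meas hA t))
    ((∑ k ∈ s, |w k|) * (∑ k ∈ t, |w k|)) (fun ω => ?_) 1)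
  rw [Pi.mul_apply, abs_mul]
  exact mul_le_mul (wbc_bdd (A := A) s ω) (wbc_bdd (A := A) t ω) (abs_nonneg _)
    ((abs_nonneg _).trans (wbc_bdd (A := A) s ω))

private lemma wbc_integral [IsFiniteMeasure μ] (hA : ∀ n, MeasurableSet (A n)) (s : Finset ℕ) :
    ∫ ω, ∑ k ∈ s, w k * (A k).indicator (1 : Ω → ℝ) ω ∂μ
      = ∑ k ∈ s, w k * (μ (A k)).toReal := by
  refine (integral_finset_sum s fun k _ =>
    (((integrable_const (1:ℝ)).indicator (hA k)).const_mul (w k))).trans ?_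
  refine Finset.sum_congr rfl fun k _ => ?_
  rw [integral_const_mul]
  exact congrArg (w k * ·) (integral_indicator_one (hA k))

private lemma wbc_integral_mul [IsFiniteMeasure μ] (hA : ∀ n, MeasurableSet (A n))
    (s t : Finset ℕ) :
    ∫ ω, (∑ k ∈ s, w k * (A k).indicator (1 : Ω → ℝ) ω) *
        (∑ k ∈ t, w k * (A k).indicator (1 : Ω → ℝ) ω) ∂μ
      = ∑ i ∈ s, ∑ j ∈ t, w i * w j * (μ (A i ∩ A j)).toReal := by
  have hpt : ∀ ω, (∑ k ∈ s, w k * (A k).indicator (1 : Ω → ℝ) ω) *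
      (∑ k ∈ t, w k * (A k).indicator (1 : Ω → ℝ) ω)
      = ∑ i ∈ s, ∑ j ∈ t, w i * w j * (A i ∩ A j).indicator (1 : Ω → ℝ) ω := by
    intro ω
    rw [Finset.sum_mul_sum]
    refine Finset.sum_congr rfl fun i _ => Finset.sum_congr rfl fun j _ => ?_
    have h1 : (A i ∩ A j).indicator (1 : Ω → ℝ) ω
        = (A i).indicator 1 ω * (A j).indicator 1 ω := by
      rw [Set.inter_indicator_one]; rfl
    rw [h1]; ring
  simp only [hpt]
  have hint : ∀ i j : ℕ, Integrable
      (fun ω => w i * w j * (A i ∩ A j).indicator (1 : Ω → ℝ) ω) μ :=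
    fun i j => ((integrable_const (1:ℝ)).indicator ((hA i).inter (hA j))).const_mul _
  refine (integral_finset_sum s fun i _ =>
    integrable_finset_sum t fun j _ => hint i j).trans ?_
  refine Finset.sum_congr rfl fun i _ => ?_
  refine (integral_finset_sum t fun j _ => hint i j).trans ?_
  refine Finset.sum_congr rfl fun j _ => ?_
  rw [integral_const_mul]
  exact congrArg (w i * w j * ·) (integral_indicator_one ((hA i).inter (hA j)))

end SF

end Aux

private lemma wbc_num {s0 t a p ε c rr Rn u Iv K : ℝ}
    (hε : 0 < ε) (ha : a = |s0|) (hcrr : c = rr * rr) (hrr0 : 0 ≤ rr)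
    (hRuu : Rn = u * u) (hIlb : -(rr*u) ≤ Iv)
    (hp0 : 0 ≤ p) (hp1 : p ≤ 1) (ht1 : 1 ≤ t) (htu : t ≤ u)
    (htp : t * t ≤ p * (u * u))
    (hK : K = 2*a + a*a + 2*rr*(1+ε)) (hεu : K ≤ ε * u) :
    (s0 + t)^2 / (c + 2*Iv + Rn) ≤ p + ε := by
  have ha0 : 0 ≤ a := ha ▸ abs_nonneg _
  have hu1 : 1 ≤ u := ht1.trans htu
  have hu0 : (0:ℝ) ≤ u := by linarith
  have hQlb : (u - rr) * (u - rr) ≤ c + 2*Iv + Rn := by nlinarith [hIlb, hcrr, hRuu]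
  have hurr : 2 * rr ≤ u := by
    have h1 : ε * (2 * rr) ≤ ε * u := by nlinarith [mul_self_nonneg a]
    exact le_of_mul_le_mul_left h1 hε
  have hx : (1:ℝ)/2 ≤ u - rr := by linarith
  have hQpos : 0 < c + 2*Iv + Rn := by nlinarith [hQlb, hx]
  rw [div_le_iff₀ hQpos]
  have hSb : (s0 + t)^2 ≤ (t + a)^2 := by
    have h1 := neg_abs_le s0
    have h2 := le_abs_self s0
    rw [← ha] at h1 h2
    nlinarith [h1, h2]
  nlinarith [hSb, htp, hQlb, htu, hu1, hεu, ha0, hrr0, hp0, hp1, hε,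
    mul_le_mul_of_nonneg_left hQlb (by positivity : (0:ℝ) ≤ p + ε),
    mul_le_mul_of_nonneg_right hεu hu0,
    mul_le_mul_of_nonneg_right htu ha0,
    mul_nonneg (mul_self_nonneg a) (by linarith : (0:ℝ) ≤ u - 1),
    mul_nonneg (mul_nonneg hrr0 hu0) (by linarith : (0:ℝ) ≤ 1 - p),
    mul_nonneg (add_nonneg hp0 hε.le) (mul_self_nonneg rr)]

set_option maxHeartbeats 1000000

/-- **Weighted Erdős–Rényi / Borel–Cantelli generalization.**
If `∑_{n=1}^m w_n P(A_n) → ∞` for real weights `w_n` (possibly negative), then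
`P(limsup A_n) ≥ limsup_n (∑_{k=1}^n w_k P(A_k))² / (∑_{i,j=1}^n w_i w_j P(A_i ∩ A_j))`. -/
theorem weighted_borel_cantelli
    {Ω : Type*} [MeasurableSpace Ω] (μ : Measure Ω) [IsProbabilityMeasure μ]
    (A : ℕ → Set Ω) (hA : ∀ n, MeasurableSet (A n)) (w : ℕ → ℝ)
    (hdiv : Tendsto (fun m => ∑ n ∈ Finset.Icc 1 m, w n * (μ (A n)).toReal)
      atTop atTop) :
    (μ (limsup A atTop)).toReal ≥
      limsup (fun n =>
        (∑ k ∈ Finset.Icc 1 n, w k * (μ (A k)).toReal) ^ 2 /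
          ∑ i ∈ Finset.Icc 1 n, ∑ j ∈ Finset.Icc 1 n,
            w i * w j * (μ (A i ∩ A j)).toReal) atTop := by
  classical
  set B : ℕ → Set Ω := fun m => ⋃ k, ⋃ (_ : m ≤ k), A k with hB
  have hBmeas : ∀ m, MeasurableSet (B m) := fun m =>
    MeasurableSet.iUnion fun k => MeasurableSet.iUnion fun _ => hA k
  have hBanti : Antitone B := fun i j hij =>
    Set.iUnion₂_subset fun k hk x hx => Set.mem_iUnion₂.mpr ⟨k, hij.trans hk, hx⟩
  have hlim : limsup A atTop = ⋂ m, B m := by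
    rw [limsup_eq_iInf_iSup_of_nat]
    simp only [hB, Set.iInf_eq_iInter, Set.iSup_eq_iUnion, ge_iff_le]
  have htend0 : Tendsto (fun m => μ (B m)) atTop (𝓝 (μ (⋂ m, B m))) :=
    tendsto_measure_iInter_atTop (fun i => (hBmeas i).nullMeasurableSet) hBanti
      ⟨0, measure_ne_top μ _⟩
  have htend : Tendsto (fun m => (μ (B m)).toReal) atTop
      (𝓝 ((μ (limsup A atTop)).toReal)) := by
    rw [hlim]
    exact (ENNReal.tendsto_toReal (measure_ne_top μ _)).comp htend0
  have hQint : ∀ n : ℕ,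
      (∑ i ∈ Finset.Icc 1 n, ∑ j ∈ Finset.Icc 1 n, w i * w j * (μ (A i ∩ A j)).toReal)
      = ∫ ω, (∑ k ∈ Finset.Icc 1 n, w k * (A k).indicator (1 : Ω → ℝ) ω) *
          (∑ k ∈ Finset.Icc 1 n, w k * (A k).indicator (1 : Ω → ℝ) ω) ∂μ :=
    fun n => (wbc_integral_mul hA _ _).symm
  have hQ0 : ∀ n : ℕ,
      0 ≤ ∑ i ∈ Finset.Icc 1 n, ∑ j ∈ Finset.Icc 1 n, w i * w j * (μ (A i ∩ A j)).toReal :=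
    fun n => (hQint n) ▸ integral_nonneg fun ω => mul_self_nonneg _
  have hr0 : ∀ n : ℕ, (0:ℝ) ≤
      (∑ k ∈ Finset.Icc 1 n, w k * (μ (A k)).toReal) ^ 2 /
        ∑ i ∈ Finset.Icc 1 n, ∑ j ∈ Finset.Icc 1 n, w i * w j * (μ (A i ∩ A j)).toReal :=
    fun n => div_nonneg (sq_nonneg _) (hQ0 n)
  refine ge_of_tendsto htend ?_
  filter_upwards [eventually_ge_atTop 1] with m hm1
  refine le_of_forall_pos_le_add fun ε hε => ?_
  obtain ⟨p, hpdef⟩ : ∃ x : ℝ, x = (μ (B m)).toReal := ⟨_, rfl⟩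
  rw [← hpdef]
  refine limsup_le_of_le (isCoboundedUnder_le_of_le atTop hr0) ?_
  have hp0 : (0:ℝ) ≤ p := hpdef ▸ ENNReal.toReal_nonneg
  have hp1 : p ≤ 1 := by
    rw [hpdef]
    have h1 : μ (B m) ≤ 1 := prob_le_one
    have := ENNReal.toReal_mono (by norm_num) h1
    simpa using this
  obtain ⟨s0, hs0⟩ : ∃ x : ℝ, x = ∑ k ∈ Finset.Ico 1 m, w k * (μ (A k)).toReal := ⟨_, rfl⟩
  obtain ⟨a, ha⟩ : ∃ x : ℝ, x = |s0| := ⟨_, rfl⟩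
  have ha0 : 0 ≤ a := ha ▸ abs_nonneg _
  obtain ⟨c, hc⟩ : ∃ x : ℝ, x =
      ∫ ω, (∑ k ∈ Finset.Ico 1 m, w k * (A k).indicator (1 : Ω → ℝ) ω) *
        (∑ k ∈ Finset.Ico 1 m, w k * (A k).indicator (1 : Ω → ℝ) ω) ∂μ := ⟨_, rfl⟩
  have hc0 : 0 ≤ c := hc ▸ integral_nonneg fun ω => mul_self_nonneg _
  obtain ⟨rr, hrrdef⟩ : ∃ x : ℝ, x = Real.sqrt c := ⟨_, rfl⟩
  have hrr0 : 0 ≤ rr := hrrdef ▸ Real.sqrt_nonneg _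
  have hcrr : c = rr * rr := by rw [hrrdef, Real.mul_self_sqrt hc0]
  obtain ⟨K, hK⟩ : ∃ x : ℝ, x = 2*a + a*a + 2*rr*(1+ε) := ⟨_, rfl⟩
  obtain ⟨C, hC⟩ : ∃ x : ℝ, x = max 1 (K / ε) := ⟨_, rfl⟩
  have hsplit : ∀ (G : ℕ → ℝ) (n : ℕ), m ≤ n →
      (∑ k ∈ Finset.Icc 1 n, G k) = (∑ k ∈ Finset.Ico 1 m, G k) + ∑ k ∈ Finset.Icc m n, G k := by
    intro G n hn
    rw [← Finset.Ico_add_one_right_eq_Icc m n, ← Finset.Ico_add_one_right_eq_Icc 1 n]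
    exact (Finset.sum_Ico_consecutive _ hm1 (by omega)).symm
  have hT : Tendsto (fun n => ∑ k ∈ Finset.Icc m n, w k * (μ (A k)).toReal) atTop atTop := by
    refine Tendsto.congr' ?_ (tendsto_atTop_add_const_right atTop (-s0) hdiv)
    filter_upwards [eventually_ge_atTop m] with n hn
    rw [hsplit _ n hn, hs0]; ring
  filter_upwards [eventually_ge_atTop m, hT.eventually_ge_atTop C] with n hnm hTn
  obtain ⟨t, htdef⟩ : ∃ x : ℝ, x = ∑ k ∈ Finset.Icc m n, w k * (μ (A k)).toReal := ⟨_, rfl⟩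
  rw [← htdef] at hTn
  have ht1 : 1 ≤ t := le_trans (hC ▸ le_max_left _ _) hTn
  have htK : K ≤ ε * t := by
    have h1 : K / ε ≤ t := le_trans (hC ▸ le_max_right _ _) hTn
    calc K = ε * (K/ε) := by field_simp
      _ ≤ ε * t := by nlinarith
  obtain ⟨Rn, hRn⟩ : ∃ x : ℝ, x =
      ∫ ω, (∑ k ∈ Finset.Icc m n, w k * (A k).indicator (1 : Ω → ℝ) ω) *
        (∑ k ∈ Finset.Icc m n, w k * (A k).indicator (1 : Ω → ℝ) ω) ∂μ := ⟨_, rfl⟩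
  have hR0 : 0 ≤ Rn := hRn ▸ integral_nonneg fun ω => mul_self_nonneg _
  obtain ⟨u, hu⟩ : ∃ x : ℝ, x = Real.sqrt Rn := ⟨_, rfl⟩
  have hRuu : Rn = u * u := by rw [hu, Real.mul_self_sqrt hR0]
  obtain ⟨Iv, hIv⟩ : ∃ x : ℝ, x =
      ∫ ω, (∑ k ∈ Finset.Ico 1 m, w k * (A k).indicator (1 : Ω → ℝ) ω) *
        (∑ k ∈ Finset.Icc m n, w k * (A k).indicator (1 : Ω → ℝ) ω) ∂μ := ⟨_, rfl⟩
  have hI2 : Iv^2 ≤ c * Rn := by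
    rw [hIv, hc, hRn]
    exact wbc_cs (wbc_memLp hA _ 2) (wbc_memLp hA _ 2)
  have hIlb : -(rr * u) ≤ Iv := by
    have habs : |Iv| ≤ rr * u := by
      have h1 : |Iv| = Real.sqrt (Iv^2) := (Real.sqrt_sq_eq_abs Iv).symm
      rw [h1, show rr * u = Real.sqrt (c * Rn) by rw [hrrdef, hu, Real.sqrt_mul hc0]]
      exact Real.sqrt_le_sqrt hI2
    exact (abs_le.mp habs).1
  -- the indicator of B m
  have hindmeas : Measurable ((B m).indicator (1 : Ω → ℝ)) :=
    measurable_const.indicator (hBmeas m)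
  have hindmem : MemLp ((B m).indicator (1 : Ω → ℝ)) 2 μ := wbc_memLp_of_bdd hindmeas 1
    (fun ω => by by_cases h : ω ∈ B m <;>
      simp [Set.indicator_of_mem, Set.indicator_of_notMem, h]) 2
  have hindind : ∀ ω, (B m).indicator (1 : Ω → ℝ) ω * (B m).indicator (1 : Ω → ℝ) ω
      = (B m).indicator (1 : Ω → ℝ) ω := by
    intro ω; by_cases h : ω ∈ B m <;>
      simp [Set.indicator_of_mem, Set.indicator_of_notMem, h]
  have hintind : ∫ ω, (B m).indicator (1 : Ω → ℝ) ω * (B m).indicator (1 : Ω → ℝ) ω ∂μ = p := by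
    rw [integral_congr_ae (Filter.Eventually.of_forall hindind), hpdef]
    exact integral_indicator_one (hBmeas m)
  have hhind : ∀ ω, (∑ k ∈ Finset.Icc m n, w k * (A k).indicator (1 : Ω → ℝ) ω) *
        (B m).indicator (1 : Ω → ℝ) ω
      = ∑ k ∈ Finset.Icc m n, w k * (A k).indicator (1 : Ω → ℝ) ω := by
    intro ω; by_cases h : ω ∈ B m
    · simp [Set.indicator_of_mem h]
    · have hz : ∀ k ∈ Finset.Icc m n, w k * (A k).indicator (1 : Ω → ℝ) ω = 0 := by
        intro k hk
        have hkA : ω ∉ A k := fun hmem =>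
          h (Set.mem_iUnion₂.mpr ⟨k, (Finset.mem_Icc.mp hk).1, hmem⟩)
        simp [Set.indicator_of_notMem hkA]
      rw [Finset.sum_eq_zero hz, zero_mul]
  have htp : t * t ≤ p * (u * u) := by
    have hcs := wbc_cs (μ := μ) (wbc_memLp (w := w) hA (Finset.Icc m n) 2) hindmem
    rw [integral_congr_ae (Filter.Eventually.of_forall hhind), wbc_integral hA, hintind] at hcs
    rw [← htdef, ← hRn] at hcs
    calc t * t = t ^ 2 := (pow_two t).symm
      _ ≤ Rn * p := hcs
      _ = p * (u * u) := by rw [hRuu]; ring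
  have htu : t ≤ u := by
    have h1 : Real.sqrt (t * t) ≤ Real.sqrt Rn := by
      refine Real.sqrt_le_sqrt ?_
      nlinarith [htp, hp1, hp0, mul_self_nonneg u]
    rw [Real.sqrt_mul_self (by linarith : (0:ℝ) ≤ t)] at h1
    rwa [← hu] at h1
  have hu1 : 1 ≤ u := ht1.trans htu
  have hεu : K ≤ ε * u := htK.trans (mul_le_mul_of_nonneg_left htu hε.le)
  have hsplitf : ∀ ω, (∑ k ∈ Finset.Icc 1 n, w k * (A k).indicator (1 : Ω → ℝ) ω)
      = (∑ k ∈ Finset.Ico 1 m, w k * (A k).indicator (1 : Ω → ℝ) ω)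
        + ∑ k ∈ Finset.Icc m n, w k * (A k).indicator (1 : Ω → ℝ) ω :=
    fun ω => hsplit _ n hnm
  have hQdec : (∑ i ∈ Finset.Icc 1 n, ∑ j ∈ Finset.Icc 1 n,
      w i * w j * (μ (A i ∩ A j)).toReal) = c + 2*Iv + Rn := by
    rw [hQint n, hc, hIv, hRn]
    have hptw : ∀ ω, (∑ k ∈ Finset.Icc 1 n, w k * (A k).indicator (1 : Ω → ℝ) ω) *
        (∑ k ∈ Finset.Icc 1 n, w k * (A k).indicator (1 : Ω → ℝ) ω)
        = (∑ k ∈ Finset.Ico 1 m, w k * (A k).indicator (1 : Ω → ℝ) ω) *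
            (∑ k ∈ Finset.Ico 1 m, w k * (A k).indicator (1 : Ω → ℝ) ω)
          + (2 * ((∑ k ∈ Finset.Ico 1 m, w k * (A k).indicator (1 : Ω → ℝ) ω) *
              (∑ k ∈ Finset.Icc m n, w k * (A k).indicator (1 : Ω → ℝ) ω))
            + (∑ k ∈ Finset.Icc m n, w k * (A k).indicator (1 : Ω → ℝ) ω) *
              (∑ k ∈ Finset.Icc m n, w k * (A k).indicator (1 : Ω → ℝ) ω)) := by
      intro ω; rw [hsplitf ω]; ring
    rw [integral_congr_ae (Filter.Eventually.of_forall hptw)]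
    have h1 : Integrable (fun ω => (∑ k ∈ Finset.Ico 1 m, w k * (A k).indicator (1 : Ω → ℝ) ω) *
        (∑ k ∈ Finset.Ico 1 m, w k * (A k).indicator (1 : Ω → ℝ) ω)) μ := wbc_int_mul hA _ _
    have h2 : Integrable (fun ω => 2 * ((∑ k ∈ Finset.Ico 1 m, w k * (A k).indicator (1 : Ω → ℝ) ω) *
        (∑ k ∈ Finset.Icc m n, w k * (A k).indicator (1 : Ω → ℝ) ω))) μ :=
      (wbc_int_mul hA _ _).const_mul 2
    have h3 : Integrable (fun ω => (∑ k ∈ Finset.Icc m n, w k * (A k).indicator (1 : Ω → ℝ) ω) *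
        (∑ k ∈ Finset.Icc m n, w k * (A k).indicator (1 : Ω → ℝ) ω)) μ := wbc_int_mul hA _ _
    have h23 : Integrable (fun ω => 2 * ((∑ k ∈ Finset.Ico 1 m, w k * (A k).indicator (1 : Ω → ℝ) ω) *
        (∑ k ∈ Finset.Icc m n, w k * (A k).indicator (1 : Ω → ℝ) ω))
        + (∑ k ∈ Finset.Icc m n, w k * (A k).indicator (1 : Ω → ℝ) ω) *
          (∑ k ∈ Finset.Icc m n, w k * (A k).indicator (1 : Ω → ℝ) ω)) μ := h2.add h3
    rw [integral_add h1 h23, integral_add h2 h3, integral_const_mul]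
    ring
  have hSdec : (∑ k ∈ Finset.Icc 1 n, w k * (μ (A k)).toReal) = s0 + t := by
    rw [hs0, htdef]; exact hsplit _ n hnm
  rw [hSdec, hQdec]
  exact wbc_num hε ha hcrr hrr0 hRuu hIlb hp0 hp1 ht1 htu htp hK hεu
end

section
/- Let (Ω, F, P) be a probability space and let {A_n}_{n=1}^∞ be a sequence of events with P(A_n) > 0 for every n ∈ ℕ. Then P(limsup_n A_n) ≥ limsup_{n→∞} n² / (Σ_{i=1}^n Σ_{j=1}^n P(A_i ∩ A_j) / (P(A_i) P(A_j))). -/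
open MeasureTheory Filter Finset
open scoped ENNReal

lemma cs_key {Ω : Type*} [MeasurableSpace Ω] (μ : Measure Ω) [IsProbabilityMeasure μ]
    (A : ℕ → Set Ω) (hA : ∀ n, MeasurableSet (A n))
    (hpos : ∀ n, 0 < (μ (A n)).toReal) (s : Finset ℕ) :
    (s.card : ℝ) ^ 2 /
        (∑ i ∈ s, ∑ j ∈ s, (μ (A i ∩ A j)).toReal / ((μ (A i)).toReal * (μ (A j)).toReal))
      ≤ (μ (⋃ k ∈ s, A k)).toReal := by
  rcases s.eq_empty_or_nonempty with rfl | hs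
  · simp [ENNReal.toReal_nonneg]
  have hne : ∀ n, μ (A n) ≠ 0 := by
    intro n h
    simpa [h] using hpos n
  have hnt : ∀ n, μ (A n) ≠ ⊤ := fun n => measure_ne_top μ _
  set U : Set Ω := ⋃ k ∈ s, A k with hU
  have hUmeas : MeasurableSet U := s.measurableSet_biUnion (fun k _ => hA k)
  set g : Ω → ℝ≥0∞ := fun ω => ∑ k ∈ s, (μ (A k))⁻¹ * (A k).indicator 1 ω with hg
  have hgmeas : Measurable g := by
    apply Finset.measurable_sum
    intro k _
    exact ((measurable_one.indicator (hA k)).const_mul _)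
  have hint1 : ∫⁻ ω, g ω ∂μ = s.card := by
    rw [hg, lintegral_finset_sum _ (fun k _ => (measurable_one.indicator (hA k)).const_mul _)]
    have h1 : ∀ k ∈ s, ∫⁻ ω, (μ (A k))⁻¹ * (A k).indicator 1 ω ∂μ = 1 := by
      intro k _
      rw [lintegral_const_mul _ (measurable_one.indicator (hA k)),
        lintegral_indicator (hA k) _]
      simp [ENNReal.inv_mul_cancel (hne k) (hnt k)]
    rw [Finset.sum_congr rfl h1]
    simp
  set T : ℝ≥0∞ := ∑ i ∈ s, ∑ j ∈ s, (μ (A i))⁻¹ * (μ (A j))⁻¹ * μ (A i ∩ A j) with hT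
  have hint2 : ∫⁻ ω, g ω * g ω ∂μ = T := by
    have hptwise : ∀ ω, g ω * g ω
        = ∑ i ∈ s, ∑ j ∈ s, (μ (A i))⁻¹ * (μ (A j))⁻¹ * (A i ∩ A j).indicator 1 ω := by
      intro ω
      rw [hg, Finset.sum_mul_sum]
      refine Finset.sum_congr rfl fun i _ => Finset.sum_congr rfl fun j _ => ?_
      have h2 : (A i ∩ A j).indicator (1 : Ω → ℝ≥0∞) ω
          = (A i).indicator 1 ω * (A j).indicator 1 ω := by
        rw [← Set.inter_indicator_mul]
        simp [Set.indicator]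
      rw [h2]; ring
    simp only [hptwise]
    rw [lintegral_finset_sum _ (fun i _ => Finset.measurable_sum _
      (fun j _ => (measurable_one.indicator ((hA i).inter (hA j))).const_mul _))]
    refine Finset.sum_congr rfl fun i _ => ?_
    rw [lintegral_finset_sum _
      (fun j _ => (measurable_one.indicator ((hA i).inter (hA j))).const_mul _)]
    refine Finset.sum_congr rfl fun j _ => ?_
    rw [lintegral_const_mul _ (measurable_one.indicator ((hA i).inter (hA j))),
      lintegral_indicator ((hA i).inter (hA j)) _]
    simp
  have hfin : ∀ i j, (μ (A i))⁻¹ * (μ (A j))⁻¹ * μ (A i ∩ A j) < ⊤ := fun i j =>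
    ENNReal.mul_lt_top
      (ENNReal.mul_lt_top (ENNReal.inv_lt_top.2 (pos_iff_ne_zero.2 (hne i)))
        (ENNReal.inv_lt_top.2 (pos_iff_ne_zero.2 (hne j)))) (measure_ne_top μ _).lt_top
  have hTne : T ≠ ⊤ := by
    rw [hT]
    exact (ENNReal.sum_lt_top.2 fun i _ => ENNReal.sum_lt_top.2 fun j _ => hfin i j).ne
  -- Cauchy–Schwarz
  have hCS : (s.card : ℝ≥0∞) ^ 2 ≤ T * μ U := by
    have hgU : ∀ ω, g ω = g ω * U.indicator 1 ω := by
      intro ω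
      by_cases hω : ω ∈ U
      · simp [Set.indicator_of_mem hω]
      · have h3 : g ω = 0 := by
          rw [hg]
          refine Finset.sum_eq_zero fun k hk => ?_
          have : ω ∉ A k := fun h => hω (Set.mem_biUnion hk h)
          simp [Set.indicator_of_notMem this]
        simp [h3]
    have hconj : Real.HolderConjugate 2 2 := Real.HolderConjugate.two_two
    have key := ENNReal.lintegral_mul_le_Lp_mul_Lq μ hconj hgmeas.aemeasurable
      (measurable_one.indicator hUmeas).aemeasurable (f := g) (g := U.indicator 1)
    have hrw1 : ∫⁻ a, (g * U.indicator (1 : Ω → ℝ≥0∞)) a ∂μ = (s.card : ℝ≥0∞) := by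
      rw [← hint1]
      exact lintegral_congr fun ω => (hgU ω).symm
    have hrw2 : ∫⁻ a, g a ^ (2 : ℝ) ∂μ = T := by
      rw [← hint2]
      refine lintegral_congr fun ω => ?_
      have h4 : g ω ^ (2 : ℝ) = g ω ^ (2 : ℕ) := by
        rw [← ENNReal.rpow_natCast]; norm_num
      rw [h4, pow_two]
    have hrw3 : ∫⁻ a, U.indicator 1 a ^ (2 : ℝ) ∂μ = μ U := by
      have : ∀ a, U.indicator (1 : Ω → ℝ≥0∞) a ^ (2 : ℝ) = U.indicator 1 a := by
        intro a
        by_cases ha : a ∈ U <;> simp [ha, ENNReal.rpow_two]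
      rw [lintegral_congr this, lintegral_indicator hUmeas _]
      simp
    rw [hrw1, hrw2, hrw3] at key
    calc (s.card : ℝ≥0∞) ^ 2 ≤ (T ^ (1 / 2 : ℝ) * μ U ^ (1 / 2 : ℝ)) ^ 2 := by
          rw [sq, sq]; exact mul_le_mul' key key
      _ = T * μ U := by
          rw [mul_pow, sq, sq, ← ENNReal.rpow_add_of_nonneg _ _ (by norm_num) (by norm_num),
            ← ENNReal.rpow_add_of_nonneg _ _ (by norm_num) (by norm_num)]
          norm_num
  have hdiv : (s.card : ℝ≥0∞) ^ 2 / T ≤ μ U := by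
    rw [ENNReal.div_le_iff_le_mul (Or.inr (measure_ne_top μ U)) (Or.inl hTne)]
    rw [mul_comm] at hCS
    exact hCS
  have hTr : T.toReal
      = ∑ i ∈ s, ∑ j ∈ s, (μ (A i ∩ A j)).toReal / ((μ (A i)).toReal * (μ (A j)).toReal) := by
    rw [hT, ENNReal.toReal_sum (fun i _ =>
      (ENNReal.sum_lt_top.2 fun j _ => hfin i j).ne)]
    refine Finset.sum_congr rfl fun i _ => ?_
    rw [ENNReal.toReal_sum (fun j _ => (hfin i j).ne)]
    refine Finset.sum_congr rfl fun j _ => ?_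
    rw [ENNReal.toReal_mul, ENNReal.toReal_mul, ENNReal.toReal_inv, ENNReal.toReal_inv]
    rw [div_eq_mul_inv, mul_inv]
    ring
  have := ENNReal.toReal_mono (measure_ne_top μ U) hdiv
  rw [ENNReal.toReal_div, ENNReal.toReal_pow, hTr] at this
  simpa using this


/-- If `P(A_n) > 0` for all `n`, then
`P(limsup A_n) ≥ limsup_n n² / (∑_{i,j=1}^n P(A_i ∩ A_j) / (P(A_i) P(A_j)))`. -/
theorem borel_cantelli_reciprocal_weights
    {Ω : Type*} [MeasurableSpace Ω] (μ : Measure Ω) [IsProbabilityMeasure μ]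
    (A : ℕ → Set Ω) (hA : ∀ n, MeasurableSet (A n))
    (hpos : ∀ n, 0 < (μ (A n)).toReal) :
    (μ (limsup A atTop)).toReal ≥
      limsup (fun n : ℕ =>
        (n : ℝ) ^ 2 /
          ∑ i ∈ Finset.Icc (1 : ℕ) n, ∑ j ∈ Finset.Icc (1 : ℕ) n,
            (μ (A i ∩ A j)).toReal / ((μ (A i)).toReal * (μ (A j)).toReal)) atTop := by
  set term : ℕ → ℕ → ℝ :=
    fun i j => (μ (A i ∩ A j)).toReal / ((μ (A i)).toReal * (μ (A j)).toReal) with hterm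
  have hterm_nonneg : ∀ i j, 0 ≤ term i j := fun i j =>
    div_nonneg ENNReal.toReal_nonneg (mul_nonneg ENNReal.toReal_nonneg ENNReal.toReal_nonneg)
  set S : ℕ → ℝ := fun n => ∑ i ∈ Finset.Icc 1 n, ∑ j ∈ Finset.Icc 1 n, term i j with hS
  set b : ℕ → ℝ := fun n => (n : ℝ) ^ 2 / S n with hb
  have hbnn : ∀ n, 0 ≤ b n := fun n => div_nonneg (sq_nonneg _)
    (Finset.sum_nonneg fun i _ => Finset.sum_nonneg fun j _ => hterm_nonneg i j)
  rw [ge_iff_le, Filter.limsup_eq]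
  set E : Set ℝ := {a | ∀ᶠ n in atTop, b n ≤ a} with hE
  rcases E.eq_empty_or_nonempty with hEe | hEne
  · rw [hEe, Real.sInf_empty]
    exact ENNReal.toReal_nonneg
  have hEbdd : BddBelow E := by
    refine ⟨0, fun a ha => ?_⟩
    obtain ⟨n, hn⟩ := ha.exists
    exact le_trans (hbnn n) hn
  obtain ⟨C, hC⟩ := hEne
  set C' : ℝ := max C 1 with hC'
  have hC'pos : (0 : ℝ) < C' := lt_of_lt_of_le one_pos (le_max_right _ _)
  have hC'ev : ∀ᶠ n in atTop, b n ≤ C' := hC.mono fun n hn => hn.trans (le_max_left _ _)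
  set U : ℕ → Set Ω := fun m => ⋃ k, ⋃ (_ : m ≤ k), A k with hU
  have hUanti : Antitone U := fun m m' hmm' =>
    Set.iUnion_mono fun k => Set.iUnion_subset fun hk => Set.subset_iUnion_of_subset
      (le_trans hmm' hk) (by exact Set.Subset.rfl)
  -- key claim
  have claim : ∀ m : ℕ, 1 ≤ m → sInf E ≤ (μ (U m)).toReal := by
    intro m hm1
    refine le_of_forall_pos_le_add fun ε hε => ?_
    refine csInf_le hEbdd ?_
    obtain ⟨N, hN⟩ := exists_nat_ge (2 * m * C' / ε)
    have hev := (Filter.eventually_ge_atTop m).and ((Filter.eventually_ge_atTop N).and hC'ev)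
    refine hev.mono ?_
    rintro n ⟨hmn, hNn, hbn⟩
    have hn1 : 1 ≤ n := le_trans hm1 hmn
    have hn0 : (0 : ℝ) < n := by exact_mod_cast hn1
    -- the double sum over `Icc m n`
    set T' : ℝ := ∑ i ∈ Finset.Icc m n, ∑ j ∈ Finset.Icc m n, term i j with hT'
    have hT'pos : 0 < T' := by
      have hmem : m ∈ Finset.Icc m n := Finset.mem_Icc.2 ⟨le_refl m, hmn⟩
      refine Finset.sum_pos' (fun i _ => Finset.sum_nonneg fun j _ => hterm_nonneg i j)
        ⟨m, hmem, Finset.sum_pos' (fun j _ => hterm_nonneg m j) ⟨m, hmem, ?_⟩⟩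
      rw [hterm]
      simp only [Set.inter_self]
      exact div_pos (hpos m) (mul_pos (hpos m) (hpos m))
    have hT'S : T' ≤ S n := by
      have hsub : Finset.Icc m n ⊆ Finset.Icc 1 n := Finset.Icc_subset_Icc_left hm1
      refine le_trans (Finset.sum_le_sum fun i _ =>
        Finset.sum_le_sum_of_subset_of_nonneg hsub fun j _ _ => hterm_nonneg i j) ?_
      exact Finset.sum_le_sum_of_subset_of_nonneg hsub
        (fun i _ _ => Finset.sum_nonneg fun j _ => hterm_nonneg i j)
    have hSpos : 0 < S n := lt_of_lt_of_le hT'pos hT'S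
    -- Cauchy–Schwarz bound
    have hkey := cs_key μ A hA hpos (Finset.Icc m n)
    rw [← hT'] at hkey
    have hUU : (μ (⋃ k ∈ Finset.Icc m n, A k)).toReal ≤ (μ (U m)).toReal := by
      refine ENNReal.toReal_mono (measure_ne_top μ _) (measure_mono ?_)
      exact Set.iUnion₂_subset fun k hk =>
        Set.subset_iUnion₂ (s := fun k (_ : m ≤ k) => A k) k ((Finset.mem_Icc.1 hk).1)
    have hcard : ((Finset.Icc m n).card : ℝ) = (n : ℝ) + 1 - (m : ℝ) := by
      rw [Nat.card_Icc]
      have : m ≤ n + 1 := le_trans hmn (Nat.le_succ n)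
      push_cast [Nat.cast_sub this]
      ring
    set c : ℝ := (n : ℝ) + 1 - (m : ℝ) with hc
    have hm1' : (1 : ℝ) ≤ (m : ℝ) := by exact_mod_cast hm1
    have hmn' : (m : ℝ) ≤ (n : ℝ) := by exact_mod_cast hmn
    have h1 : c ^ 2 / S n ≤ (μ (U m)).toReal := by
      calc c ^ 2 / S n ≤ c ^ 2 / T' := by
            apply div_le_div_of_nonneg_left (sq_nonneg c) hT'pos hT'S
        _ ≤ (μ (⋃ k ∈ Finset.Icc m n, A k)).toReal := by rw [← hcard] at *; exact hkey
        _ ≤ (μ (U m)).toReal := hUU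
    have hx : (n : ℝ) ^ 2 ≤ C' * S n := by
      rw [hb] at hbn
      exact (div_le_iff₀ hSpos).1 hbn
    have hdiff : (n : ℝ) ^ 2 - c ^ 2 ≤ 2 * m * n := by nlinarith
    have h2 : ((n : ℝ) ^ 2 - c ^ 2) / S n ≤ ε := by
      have hNpos : (0 : ℝ) < N := by
        by_contra h
        push_neg at h
        have : 2 * (m : ℝ) * C' / ε ≤ 0 := le_trans hN h
        have h2' : 0 < 2 * (m : ℝ) * C' := by positivity
        have := div_pos h2' hε
        linarith
      have hNn' : (N : ℝ) ≤ (n : ℝ) := by exact_mod_cast hNn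
      rw [div_le_iff₀ hSpos]
      have hεn : 2 * (m : ℝ) * C' ≤ ε * n := by
        have : 2 * (m : ℝ) * C' / ε ≤ n := le_trans hN hNn'
        rw [div_le_iff₀ hε] at this
        linarith
      nlinarith
    have hsplit : b n = c ^ 2 / S n + ((n : ℝ) ^ 2 - c ^ 2) / S n := by
      rw [hb]
      field_simp
      ring
    rw [hsplit]
    exact add_le_add h1 h2
  -- conclude
  have hlimsupA : limsup A atTop = ⋂ m, U m := by
    rw [limsup_eq_iInf_iSup_of_nat]
    rfl
  have hmeq : μ (limsup A atTop) = ⨅ m, μ (U m) := by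
    rw [hlimsupA]
    refine Directed.measure_iInter (fun m => ?_) (hUanti.directed_ge) ⟨0, measure_ne_top μ _⟩
    exact (MeasurableSet.iUnion fun k => MeasurableSet.iUnion fun _ => hA k).nullMeasurableSet
  have hL : ∀ m, ENNReal.ofReal (sInf E) ≤ μ (U m) := by
    intro m
    have h1 : sInf E ≤ (μ (U (m + 1))).toReal := claim (m + 1) (Nat.succ_le_succ (Nat.zero_le m))
    have h2 : ENNReal.ofReal (sInf E) ≤ μ (U (m + 1)) := by
      calc ENNReal.ofReal (sInf E) ≤ ENNReal.ofReal ((μ (U (m + 1))).toReal) :=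
            ENNReal.ofReal_le_ofReal h1
        _ = μ (U (m + 1)) := ENNReal.ofReal_toReal (measure_ne_top μ _)
    exact le_trans h2 (measure_mono (hUanti (Nat.le_succ m)))
  have hfinal : ENNReal.ofReal (sInf E) ≤ μ (limsup A atTop) := by
    rw [hmeq]
    exact le_iInf hL
  rcases le_or_gt (sInf E) 0 with h | h
  · exact le_trans h ENNReal.toReal_nonneg
  · have := ENNReal.toReal_mono (measure_ne_top μ _) hfinal
    rwa [ENNReal.toReal_ofReal h.le] at this
end

section
/- Let (Ω, F, P) be a probability space, let A_1, ..., A_n be events, and let w_1, ..., w_n be real numbers. Then (Σ_{i=1}^n w_i P(A_i))² ≤ P(⋃_{i=1}^n A_i) · (Σ_{i=1}^n Σ_{j=1}^n w_i w_j P(A_i ∩ A_j)). (This is a weighted version of the Chung–Erdős inequality.) -/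
open MeasureTheory Finset

/-- Cauchy–Schwarz inequality for integrals of real functions in L². -/
theorem integral_mul_sq_le_integral_sq_mul_integral_sq
    {Ω : Type*} [MeasurableSpace Ω] (μ : Measure Ω) {f g : Ω → ℝ}
    (hf : MemLp f 2 μ) (hg : MemLp g 2 μ) :
    (∫ x, f x * g x ∂μ) ^ 2 ≤ (∫ x, f x ^ 2 ∂μ) * (∫ x, g x ^ 2 ∂μ) := by
  have hF := hf.coeFn_toLp
  have hG := hg.coeFn_toLp
  set F := hf.toLp f
  set G := hg.toLp g
  have h1 : ∫ x, f x * g x ∂μ = inner (𝕜 := ℝ) F G := by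
    rw [MeasureTheory.L2.inner_def]
    refine integral_congr_ae ?_
    filter_upwards [hF, hG] with x hx hy
    simp [hx, hy, RCLike.inner_apply, mul_comm]
  have h2 : ∫ x, f x ^ 2 ∂μ = inner (𝕜 := ℝ) F F := by
    rw [MeasureTheory.L2.inner_def]
    refine integral_congr_ae ?_
    filter_upwards [hF] with x hx
    simp [hx, RCLike.inner_apply, sq]
  have h3 : ∫ x, g x ^ 2 ∂μ = inner (𝕜 := ℝ) G G := by
    rw [MeasureTheory.L2.inner_def]
    refine integral_congr_ae ?_
    filter_upwards [hG] with x hx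
    simp [hx, RCLike.inner_apply, sq]
  rw [h1, h2, h3, sq]
  exact real_inner_mul_inner_self_le F G

/-- **Weighted Chung–Erdős inequality.**
`(∑_{i=1}^n w_i P(A_i))² ≤ P(⋃_{i=1}^n A_i) · ∑_{i,j=1}^n w_i w_j P(A_i ∩ A_j)`. -/
theorem weighted_chung_erdos
    {Ω : Type*} [MeasurableSpace Ω] (μ : Measure Ω) [IsProbabilityMeasure μ]
    (n : ℕ) (A : ℕ → Set Ω) (hA : ∀ i, MeasurableSet (A i)) (w : ℕ → ℝ) :
    (∑ i ∈ Finset.Icc 1 n, w i * (μ (A i)).toReal) ^ 2 ≤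
      (μ (⋃ i ∈ Finset.Icc 1 n, A i)).toReal *
        ∑ i ∈ Finset.Icc 1 n, ∑ j ∈ Finset.Icc 1 n,
          w i * w j * (μ (A i ∩ A j)).toReal := by
  set U : Set Ω := ⋃ i ∈ Finset.Icc 1 n, A i with hU
  have hUm : MeasurableSet U := Finset.measurableSet_biUnion _ (fun i _ => hA i)
  set f : Ω → ℝ := U.indicator (fun _ => (1 : ℝ)) with hfdef
  set g : Ω → ℝ := fun x => ∑ i ∈ Finset.Icc 1 n, (A i).indicator (fun _ => w i) x with hgdef
  have hμfin : ∀ s : Set Ω, μ s ≠ ⊤ := fun s => measure_ne_top μ s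
  have hf2 : MemLp f 2 μ := memLp_indicator_const 2 hUm 1 (Or.inr (hμfin U))
  have hg2 : MemLp g 2 μ := by
    exact memLp_finset_sum _ fun i _ =>
      memLp_indicator_const 2 (hA i) (w i) (Or.inr (hμfin (A i)))
  -- f * g = g
  have hfg : ∀ x, f x * g x = g x := by
    intro x
    by_cases hx : x ∈ U
    · simp [hfdef, Set.indicator_of_mem hx]
    · have : g x = 0 := by
        apply Finset.sum_eq_zero
        intro i hi
        have hxi : x ∉ A i := fun h => hx (Set.mem_biUnion hi h)
        simp [Set.indicator_of_notMem hxi]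
      simp [this]
  -- ∫ g = ∑ w i * μ(A i)
  have hint_g : ∫ x, g x ∂μ = ∑ i ∈ Finset.Icc 1 n, w i * (μ (A i)).toReal := by
    rw [hgdef, integral_finset_sum]
    · refine Finset.sum_congr rfl fun i _ => ?_
      rw [integral_indicator_const _ (hA i)]
      simp [mul_comm, Measure.real]
    · intro i _
      exact (integrable_const (w i)).indicator (hA i)
  -- ∫ f² = μ U
  have hint_f2 : ∫ x, f x ^ 2 ∂μ = (μ U).toReal := by
    have : ∀ x, f x ^ 2 = U.indicator (fun _ => (1:ℝ)) x := by
      intro x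
      by_cases hx : x ∈ U <;> simp [hfdef, Set.indicator_of_mem, Set.indicator_of_notMem, hx]
    rw [integral_congr_ae (Filter.Eventually.of_forall this), integral_indicator_const _ hUm]
    simp [Measure.real]
  -- ∫ g² = double sum
  have hint_g2 : ∫ x, g x ^ 2 ∂μ =
      ∑ i ∈ Finset.Icc 1 n, ∑ j ∈ Finset.Icc 1 n, w i * w j * (μ (A i ∩ A j)).toReal := by
    have hgg : ∀ x, g x ^ 2 = ∑ i ∈ Finset.Icc 1 n, ∑ j ∈ Finset.Icc 1 n,
        (A i ∩ A j).indicator (fun _ => w i * w j) x := by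
      intro x
      rw [sq, hgdef, Finset.sum_mul_sum]
      refine Finset.sum_congr rfl fun i _ => Finset.sum_congr rfl fun j _ => ?_
      rw [← Set.inter_indicator_mul]
    rw [integral_congr_ae (Filter.Eventually.of_forall hgg), integral_finset_sum]
    · refine Finset.sum_congr rfl fun i _ => ?_
      rw [integral_finset_sum]
      · refine Finset.sum_congr rfl fun j _ => ?_
        rw [integral_indicator_const _ ((hA i).inter (hA j))]
        simp [mul_comm, Measure.real]
      · intro j _
        exact (integrable_const _).indicator ((hA i).inter (hA j))
    · intro i _
      apply integrable_finset_sum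
      intro j _
      exact (integrable_const _).indicator ((hA i).inter (hA j))
  have key := integral_mul_sq_le_integral_sq_mul_integral_sq μ hf2 hg2
  rw [integral_congr_ae (Filter.Eventually.of_forall hfg)] at key
  rw [hint_g, hint_f2, hint_g2] at key
  exact key
end

section
/- Let (Ω, F, P) be a probability space, let {A_n}_{n=1}^∞ be a sequence of events, and let {w_n}_{n=1}^∞ be real numbers such that lim_{m→∞} Σ_{n=1}^m w_n P(A_n) = ∞. Then for every s ∈ ℕ, limsup_{n→∞} (Σ_{k=1}^n w_k P(A_k))² / (Σ_{i=1}^n Σ_{j=1}^n w_i w_j P(A_i ∩ A_j)) = limsup_{n→∞} (Σ_{k=s}^n w_k P(A_k))² / (Σ_{i=s}^n Σ_{j=s}^n w_i w_j P(A_i ∩ A_j)). -/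
open MeasureTheory Filter Finset Topology

section Aux
variable {Ω : Type*} [MeasurableSpace Ω] {μ : Measure Ω} [IsProbabilityMeasure μ]
  {A : ℕ → Set Ω} {w : ℕ → ℝ}

private noncomputable def Sf (A : ℕ → Set Ω) (w : ℕ → ℝ) (F : Finset ℕ) : Ω → ℝ :=
  fun ω => ∑ i ∈ F, w i * (A i).indicator (1 : Ω → ℝ) ω

private lemma ind_int (hA : ∀ n, MeasurableSet (A n)) (i : ℕ) :
    Integrable ((A i).indicator (1 : Ω → ℝ)) μ :=
  (integrable_const 1).indicator (hA i)

private lemma integrable_ind (hA : ∀ n, MeasurableSet (A n)) (i j : ℕ) :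
    Integrable ((A i ∩ A j).indicator (1 : Ω → ℝ)) μ :=
  (integrable_const 1).indicator ((hA i).inter (hA j))

private lemma integrable_Sf (hA : ∀ n, MeasurableSet (A n)) (F : Finset ℕ) :
    Integrable (Sf A w F) μ :=
  integrable_finset_sum _ fun i _ =>
    ((ind_int hA i).const_mul (w i))

private lemma Sf_mul (F G : Finset ℕ) (ω : Ω) :
    Sf A w F ω * Sf A w G ω =
      ∑ i ∈ F, ∑ j ∈ G, w i * w j * (A i ∩ A j).indicator (1 : Ω → ℝ) ω := by
  simp only [Sf]
  rw [Finset.sum_mul_sum]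
  refine Finset.sum_congr rfl fun i _ => Finset.sum_congr rfl fun j _ => ?_
  have := congrFun (Set.inter_indicator_one (M₀ := ℝ) (s := A i) (t := A j)) ω
  simp only [Pi.mul_apply] at this
  rw [this]; ring

private lemma integrable_Sf_mul (hA : ∀ n, MeasurableSet (A n)) (F G : Finset ℕ) :
    Integrable (fun ω => Sf A w F ω * Sf A w G ω) μ := by
  simp only [Sf_mul]
  exact integrable_finset_sum _ fun i _ => integrable_finset_sum _ fun j _ =>
    ((integrable_ind hA i j).const_mul _)

private lemma int_Sf (hA : ∀ n, MeasurableSet (A n)) (F : Finset ℕ) :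
    ∫ ω, Sf A w F ω ∂μ = ∑ i ∈ F, w i * (μ (A i)).toReal := by
  simp only [Sf]
  rw [integral_finset_sum _ fun i _ =>
    ((ind_int hA i).const_mul (w i))]
  exact Finset.sum_congr rfl fun i _ => by
    rw [integral_const_mul, integral_indicator_one (hA i)]; rfl

private lemma int_Sf_mul (hA : ∀ n, MeasurableSet (A n)) (F G : Finset ℕ) :
    ∫ ω, Sf A w F ω * Sf A w G ω ∂μ =
      ∑ i ∈ F, ∑ j ∈ G, w i * w j * (μ (A i ∩ A j)).toReal := by
  simp only [Sf_mul]
  rw [integral_finset_sum _ fun i _ => integrable_finset_sum _ fun j _ =>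
    ((integrable_ind hA i j).const_mul _)]
  refine Finset.sum_congr rfl fun i _ => ?_
  rw [integral_finset_sum _ fun j _ => ((integrable_ind hA i j).const_mul _)]
  exact Finset.sum_congr rfl fun j _ => by
    rw [integral_const_mul, integral_indicator_one ((hA i).inter (hA j))]; rfl

/-- variance nonneg : (∫ X)² ≤ ∫ X·X on a probability space -/
private lemma sq_int_le (hA : ∀ n, MeasurableSet (A n)) (F : Finset ℕ) :
    (∫ ω, Sf A w F ω ∂μ) ^ 2 ≤ ∫ ω, Sf A w F ω * Sf A w F ω ∂μ := by
  set m := ∫ ω, Sf A w F ω ∂μ with hm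
  have h0 : 0 ≤ ∫ ω, (Sf A w F ω - m) ^ 2 ∂μ := integral_nonneg fun ω => sq_nonneg _
  have hkey : (fun ω => (Sf A w F ω - m) ^ 2) =
      fun ω => (Sf A w F ω * Sf A w F ω - (2 * m) * Sf A w F ω) + m ^ 2 := by
    funext ω; ring
  have i1 : Integrable (fun ω => Sf A w F ω * Sf A w F ω - (2 * m) * Sf A w F ω) μ :=
    (integrable_Sf_mul hA F F).sub ((integrable_Sf hA F).const_mul (2 * m))
  rw [hkey, integral_add i1 (integrable_const _),
    integral_sub (integrable_Sf_mul hA F F) ((integrable_Sf hA F).const_mul (2 * m)),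
    integral_const_mul, integral_const, probReal_univ] at h0
  simp only [ENNReal.toReal_one, smul_eq_mul, one_mul, ← hm] at h0
  nlinarith [h0]
end Aux

private lemma ratio01 (x y : ℝ) (hxy : x ^ 2 ≤ y) : 0 ≤ x ^ 2 / y ∧ x ^ 2 / y ≤ 1 := by
  have hy0 : 0 ≤ y := le_trans (sq_nonneg x) hxy
  rcases hy0.eq_or_lt with h | h
  · rw [← h, div_zero]; exact ⟨le_rfl, zero_le_one⟩
  · exact ⟨div_nonneg (sq_nonneg x) hy0, (div_le_one h).2 hxy⟩

private lemma limsup_eq_of_sub_tendsto_zero {f g : ℕ → ℝ}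
    (h : Tendsto (fun n => f n - g n) atTop (𝓝 0))
    (hf0 : ∀ n, 0 ≤ f n) (hg0 : ∀ n, 0 ≤ g n)
    (hf1 : ∀ n, f n ≤ 1) (hg1 : ∀ n, g n ≤ 1) :
    limsup f atTop = limsup g atTop := by
  have main : ∀ (u v : ℕ → ℝ), Tendsto (fun n => u n - v n) atTop (𝓝 0) →
      (∀ n, 0 ≤ u n) → (∀ n, 0 ≤ v n) → (∀ n, v n ≤ 1) →
      limsup u atTop ≤ limsup v atTop := by
    intro u v huv hu0 hv0 hv1
    refine le_of_forall_pos_le_add fun ε hε => ?_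
    have hev : ∀ᶠ n in atTop, u n ≤ v n + ε := by
      have h2 := Metric.tendsto_nhds.mp huv ε hε
      filter_upwards [h2] with n hn
      rw [Real.dist_eq, sub_zero] at hn
      have := (abs_lt.mp hn).2
      linarith
    calc limsup u atTop ≤ limsup (fun n => v n + ε) atTop :=
        limsup_le_limsup hev (isCoboundedUnder_le_of_le atTop hu0)
          (isBoundedUnder_of ⟨1 + ε, fun n => add_le_add_left (hv1 n) ε⟩)
      _ = limsup v atTop + ε := limsup_add_const atTop v ε
          (isBoundedUnder_of ⟨1, hv1⟩) (isCoboundedUnder_le_of_le atTop hv0)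
  refine le_antisymm (main f g h hf0 hg0 hg1) (main g f ?_ hg0 hf0 hf1)
  simpa [neg_sub] using h.neg

/-- If `∑_{n=1}^m w_n P(A_n) → ∞`, then for every `s ∈ ℕ` the limsup of the
Chung–Erdős-type ratio is unchanged when the sums start from index `s`
instead of index `1`. -/
theorem limsup_ratio_tail_invariant
    {Ω : Type*} [MeasurableSpace Ω] (μ : Measure Ω) [IsProbabilityMeasure μ]
    (A : ℕ → Set Ω) (hA : ∀ n, MeasurableSet (A n)) (w : ℕ → ℝ)
    (hdiv : Tendsto (fun m => ∑ n ∈ Finset.Icc 1 m, w n * (μ (A n)).toReal)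
      atTop atTop) :
    ∀ s : ℕ, 1 ≤ s →
      limsup (fun n =>
        (∑ k ∈ Finset.Icc 1 n, w k * (μ (A k)).toReal) ^ 2 /
          ∑ i ∈ Finset.Icc 1 n, ∑ j ∈ Finset.Icc 1 n,
            w i * w j * (μ (A i ∩ A j)).toReal) atTop =
      limsup (fun n =>
        (∑ k ∈ Finset.Icc s n, w k * (μ (A k)).toReal) ^ 2 /
          ∑ i ∈ Finset.Icc s n, ∑ j ∈ Finset.Icc s n,
            w i * w j * (μ (A i ∩ A j)).toReal) atTop := by
  intro s hs
  classical
  set a : ℕ → ℝ := fun n => ∑ k ∈ Finset.Icc 1 n, w k * (μ (A k)).toReal with ha_def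
  set b : ℕ → ℝ := fun n => ∑ k ∈ Finset.Icc s n, w k * (μ (A k)).toReal with hb_def
  set Q1 : ℕ → ℝ := fun n => ∑ i ∈ Finset.Icc 1 n, ∑ j ∈ Finset.Icc 1 n,
      w i * w j * (μ (A i ∩ A j)).toReal with hQ1_def
  set Qs : ℕ → ℝ := fun n => ∑ i ∈ Finset.Icc s n, ∑ j ∈ Finset.Icc s n,
      w i * w j * (μ (A i ∩ A j)).toReal with hQs_def
  show limsup (fun n => a n ^ 2 / Q1 n) atTop = limsup (fun n => b n ^ 2 / Qs n) atTop
  set f : ℕ → ℝ := fun n => a n ^ 2 / Q1 n with hf_def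
  set g : ℕ → ℝ := fun n => b n ^ 2 / Qs n with hg_def
  have hdiv' : Tendsto a atTop atTop := hdiv
  set Y : Ω → ℝ := Sf A w (Finset.Icc 1 (s - 1)) with hY_def
  set X : ℕ → Ω → ℝ := fun n => Sf A w (Finset.Icc s n) with hX_def
  set c : ℝ := ∑ k ∈ Finset.Icc 1 (s - 1), w k * (μ (A k)).toReal with hc_def
  -- integral identifications
  have ha_int : ∀ n : ℕ, a n = ∫ ω, Sf A w (Finset.Icc 1 n) ω ∂μ :=
    fun n => (int_Sf hA _).symm
  have hb_int : ∀ n : ℕ, b n = ∫ ω, X n ω ∂μ := fun n => (int_Sf hA _).symm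
  have hQ1_int : ∀ n : ℕ, Q1 n
      = ∫ ω, Sf A w (Finset.Icc 1 n) ω * Sf A w (Finset.Icc 1 n) ω ∂μ :=
    fun n => (int_Sf_mul hA _ _).symm
  have hQs_int : ∀ n : ℕ, Qs n = ∫ ω, X n ω * X n ω ∂μ :=
    fun n => (int_Sf_mul hA _ _).symm
  -- splitting of sums
  have hsplit : ∀ (F : ℕ → ℝ) (n : ℕ), s ≤ n + 1 →
      ∑ i ∈ Finset.Icc 1 n, F i
        = (∑ i ∈ Finset.Icc 1 (s - 1), F i) + ∑ i ∈ Finset.Icc s n, F i := by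
    intro F n hn
    have h1 : Finset.Icc 1 (s - 1) = Finset.Ico 1 s := by
      rw [← Finset.Ico_add_one_right_eq_Icc]
      congr 1
      omega
    have h2 : Finset.Icc s n = Finset.Ico s (n + 1) := by rw [Finset.Ico_add_one_right_eq_Icc]
    have h3 : Finset.Icc 1 n = Finset.Ico 1 (n + 1) := by rw [Finset.Ico_add_one_right_eq_Icc]
    rw [h1, h2, h3, Finset.sum_Ico_consecutive F hs hn]
  have ha_split : ∀ n, s ≤ n + 1 → a n = c + b n := fun n hn => hsplit _ n hn
  have hS_split : ∀ n, s ≤ n + 1 → ∀ ω, Sf A w (Finset.Icc 1 n) ω = Y ω + X n ω := by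
    intro n hn ω
    exact hsplit (fun i => w i * (A i).indicator (1 : Ω → ℝ) ω) n hn
  set r : ℕ → ℝ := fun n => ∫ ω, Y ω * X n ω ∂μ with hr_def
  set d : ℝ := ∫ ω, Y ω * Y ω ∂μ with hd_def
  have hd0 : 0 ≤ d := integral_nonneg fun ω => mul_self_nonneg _
  have hQsplit : ∀ n, s ≤ n + 1 → Q1 n = Qs n + (2 * r n + d) := by
    intro n hn
    rw [hQ1_int n, hQs_int n]
    have hptw : (fun ω => Sf A w (Finset.Icc 1 n) ω * Sf A w (Finset.Icc 1 n) ω)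
        = fun ω => X n ω * X n ω + (2 * (Y ω * X n ω) + Y ω * Y ω) := by
      funext ω; rw [hS_split n hn ω]; ring
    rw [hptw]
    have iXX : Integrable (fun ω => X n ω * X n ω) μ := integrable_Sf_mul hA _ _
    have iYX : Integrable (fun ω => Y ω * X n ω) μ := integrable_Sf_mul hA _ _
    have iYY : Integrable (fun ω => Y ω * Y ω) μ := integrable_Sf_mul hA _ _
    have iC : Integrable (fun ω => 2 * (Y ω * X n ω)) μ := iYX.const_mul 2
    have iS : Integrable (fun ω => 2 * (Y ω * X n ω) + Y ω * Y ω) μ := iC.add iYY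
    rw [integral_add iXX iS, integral_add iC iYY, integral_const_mul]
  -- divergence facts
  have hb_div : Tendsto b atTop atTop := by
    have h1 : Tendsto (fun n => a n + -c) atTop atTop :=
      tendsto_atTop_add_const_right atTop (-c) hdiv'
    refine h1.congr' ?_
    filter_upwards [eventually_ge_atTop s] with n hn
    rw [ha_split n (by omega)]; ring
  have hbsq : ∀ n, b n ^ 2 ≤ Qs n := by
    intro n; rw [hb_int n, hQs_int n]; exact sq_int_le hA _
  have hasq : ∀ n, a n ^ 2 ≤ Q1 n := by
    intro n; rw [ha_int n, hQ1_int n]; exact sq_int_le hA _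
  have hQs_div : Tendsto Qs atTop atTop := by
    refine tendsto_atTop_mono (fun n => hbsq n) ?_
    exact (hb_div.atTop_mul_atTop₀ hb_div).congr fun n => by ring
  -- pointwise AM-GM bound on the cross term
  have hrbound : ∀ δ : ℝ, 0 < δ → ∀ n, |r n| ≤ δ * Qs n + d / (4 * δ) := by
    intro δ hδ n
    have iYX : Integrable (fun ω => Y ω * X n ω) μ := integrable_Sf_mul hA _ _
    have iXX : Integrable (fun ω => X n ω * X n ω) μ := integrable_Sf_mul hA _ _
    have iYY : Integrable (fun ω => Y ω * Y ω) μ := integrable_Sf_mul hA _ _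
    have hptw : ∀ ω, |Y ω * X n ω| ≤ δ * (X n ω * X n ω) + (Y ω * Y ω) / (4 * δ) := by
      intro ω
      set x := X n ω; set y := Y ω
      have h4 : 4 * δ * |y * x| ≤ 4 * δ ^ 2 * (x * x) + y * y := by
        rcases abs_cases (y * x) with ⟨h, _⟩ | ⟨h, _⟩ <;> rw [h] <;>
          nlinarith [sq_nonneg (2 * δ * x - y), sq_nonneg (2 * δ * x + y)]
      have h5 : 4 * δ * (δ * (x * x) + (y * y) / (4 * δ)) = 4 * δ ^ 2 * (x * x) + y * y := by
        field_simp
      have h6 : 4 * δ * |y * x| ≤ 4 * δ * (δ * (x * x) + (y * y) / (4 * δ)) := by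
        rw [h5]; exact h4
      exact le_of_mul_le_mul_left h6 (by positivity)
    have step1 : |r n| ≤ ∫ ω, |Y ω * X n ω| ∂μ := by
      have := norm_integral_le_integral_norm (fun ω => Y ω * X n ω) (μ := μ)
      simpa only [Real.norm_eq_abs] using this
    have i2 : Integrable (fun ω => δ * (X n ω * X n ω) + (Y ω * Y ω) / (4 * δ)) μ :=
      (iXX.const_mul δ).add (iYY.div_const (4 * δ))
    have step2 : ∫ ω, |Y ω * X n ω| ∂μ
        ≤ ∫ ω, (δ * (X n ω * X n ω) + (Y ω * Y ω) / (4 * δ)) ∂μ :=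
      integral_mono iYX.abs i2 hptw
    have step3 : ∫ ω, (δ * (X n ω * X n ω) + (Y ω * Y ω) / (4 * δ)) ∂μ
        = δ * Qs n + d / (4 * δ) := by
      rw [integral_add (iXX.const_mul δ) (iYY.div_const (4 * δ)), integral_const_mul,
        integral_div, ← hQs_int n]
    linarith [step1, step2, step3.le, step3.ge]
  -- the relative error tends to zero
  have hv : Tendsto (fun n => (2 * r n + d) / Qs n) atTop (𝓝 0) := by
    rw [Metric.tendsto_atTop]
    intro ε hε
    have hδ : (0:ℝ) < ε / 4 := by linarith
    set C : ℝ := 2 * (d / ε) + d with hC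
    have hC0 : 0 ≤ C := by
      have : 0 ≤ d / ε := div_nonneg hd0 hε.le
      simp only [hC]; linarith
    have hev := hQs_div.eventually_ge_atTop (max 1 (2 * (C + 1) / ε))
    rw [eventually_atTop] at hev
    obtain ⟨N, hN⟩ := hev
    refine ⟨N, fun n hn => ?_⟩
    have hQge := hN n hn
    have hQs1 : (1:ℝ) ≤ Qs n := le_trans (le_max_left _ _) hQge
    have hQspos : (0:ℝ) < Qs n := lt_of_lt_of_le one_pos hQs1
    have hQge2 : 2 * (C + 1) / ε ≤ Qs n := le_trans (le_max_right _ _) hQge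
    have h1 := hrbound (ε / 4) hδ n
    have he1 : d / (4 * (ε / 4)) = d / ε := by rw [show (4:ℝ) * (ε / 4) = ε by ring]
    rw [he1] at h1
    have habs : |2 * r n + d| ≤ 2 * |r n| + d := by
      calc |2 * r n + d| ≤ |2 * r n| + |d| := abs_add_le _ _
        _ = 2 * |r n| + d := by rw [abs_mul, abs_two, abs_of_nonneg hd0]
    have hkey : |2 * r n + d| ≤ (ε / 2) * Qs n + C := by
      simp only [hC]; linarith
    have hmul : (ε / 2) * (2 * (C + 1) / ε) = C + 1 := by
      field_simp
    have hfin : (ε / 2) * Qs n + C < ε * Qs n := by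
      have := mul_le_mul_of_nonneg_left hQge2 (by linarith : (0:ℝ) ≤ ε / 2)
      rw [hmul] at this
      nlinarith
    rw [Real.dist_eq, sub_zero, abs_div, abs_of_pos hQspos, div_lt_iff₀ hQspos]
    exact lt_of_le_of_lt hkey hfin
  -- bounds on f and g
  have hf01 : ∀ n, 0 ≤ f n ∧ f n ≤ 1 := fun n => ratio01 _ _ (hasq n)
  have hg01 : ∀ n, 0 ≤ g n ∧ g n ≤ 1 := fun n => ratio01 _ _ (hbsq n)
  -- the difference tends to zero
  have hcb : Tendsto (fun n => c / b n) atTop (𝓝 0) :=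
    Tendsto.div_atTop tendsto_const_nhds hb_div
  have h1 : Tendsto (fun n => (1 + c / b n) ^ 2) atTop (𝓝 1) := by
    have := ((tendsto_const_nhds (x := (1:ℝ)) (f := atTop)).add hcb).pow 2
    simpa using this
  have h2 : Tendsto (fun n => 1 / (1 + (2 * r n + d) / Qs n)) atTop (𝓝 1) := by
    have hden : Tendsto (fun n => 1 + (2 * r n + d) / Qs n) atTop (𝓝 1) := by
      have := (tendsto_const_nhds (x := (1:ℝ)) (f := atTop)).add hv
      simpa using this
    have := hden.inv₀ one_ne_zero
    simpa [one_div] using this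
  have hE : Tendsto
      (fun n => (1 + c / b n) ^ 2 * (1 / (1 + (2 * r n + d) / Qs n)) - 1) atTop (𝓝 0) := by
    have := (h1.mul h2).sub_const 1
    simpa using this
  have hfg : Tendsto (fun n => f n - g n) atTop (𝓝 0) := by
    refine squeeze_zero_norm' ?_ (by simpa using hE.abs)
    have e1 : ∀ᶠ n in atTop, s ≤ n + 1 := eventually_atTop.2 ⟨s, fun n hn => by omega⟩
    have e2 := hb_div.eventually_ge_atTop 1
    have e3 := hQs_div.eventually_ge_atTop 1
    have e4 := hdiv'.eventually_ge_atTop 1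
    filter_upwards [e1, e2, e3, e4] with n hn hb1 hQs1 ha1
    have hb0 : b n ≠ 0 := by linarith
    have hQs0 : Qs n ≠ 0 := by linarith
    have hQ10 : Q1 n ≠ 0 := by nlinarith [hasq n]
    have hQe := hQsplit n hn
    have hae := ha_split n hn
    have hQ10' : Qs n + (2 * r n + d) ≠ 0 := by rw [← hQe]; exact hQ10
    have heq : 1 + (2 * r n + d) / Qs n = (Qs n + (2 * r n + d)) / Qs n := by
      field_simp
    have h1t : 1 + (2 * r n + d) / Qs n ≠ 0 := by
      rw [heq]
      exact div_ne_zero hQ10' hQs0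
    have key : f n - g n
        = g n * ((1 + c / b n) ^ 2 * (1 / (1 + (2 * r n + d) / Qs n)) - 1) := by
      show a n ^ 2 / Q1 n - b n ^ 2 / Qs n
        = b n ^ 2 / Qs n * ((1 + c / b n) ^ 2 * (1 / (1 + (2 * r n + d) / Qs n)) - 1)
      rw [hae, hQe, heq, one_div_div]
      field_simp [hb0, hQs0, hQ10']
      ring
    rw [key, Real.norm_eq_abs, abs_mul]
    have hgb : |g n| ≤ 1 := abs_le.2 ⟨by linarith [(hg01 n).1], (hg01 n).2⟩
    calc |g n| * |(1 + c / b n) ^ 2 * (1 / (1 + (2 * r n + d) / Qs n)) - 1|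
        ≤ 1 * |(1 + c / b n) ^ 2 * (1 / (1 + (2 * r n + d) / Qs n)) - 1| :=
          mul_le_mul_of_nonneg_right hgb (abs_nonneg _)
      _ = _ := by rw [one_mul, one_div]
  exact limsup_eq_of_sub_tendsto_zero hfg (fun n => (hf01 n).1) (fun n => (hg01 n).1)
    (fun n => (hf01 n).2) (fun n => (hg01 n).2)
end

section
/- Let (Ω, F, P) be a probability space, let {A_n}_{n=1}^∞ be a sequence of events, and let {w_n}_{n=1}^∞ be a bounded sequence of nonnegative real numbers with Σ_{n=1}^∞ w_n P(A_n) = ∞. Then P(limsup_n A_n) ≥ limsup_{n→∞} (Σ_{1≤i<j≤n} w_i w_j P(A_i) P(A_j)) / (Σ_{1≤i<j≤n} w_i w_j P(A_i ∩ A_j)). -/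
open MeasureTheory Filter Finset
open scoped ENNReal Topology

lemma dsum_split (f : ℕ → ℕ → ℝ) (hf : ∀ i j, f i j = f j i) (n : ℕ) :
    ∑ i ∈ Ioc 0 n, ∑ j ∈ Ioc 0 n, f i j
      = ∑ i ∈ Ioc 0 n, f i i + 2 * ∑ i ∈ Ioc 0 n, ∑ j ∈ Ioc i n, f i j := by
  have hsplit : ∀ i ∈ Ioc 0 n, ∑ j ∈ Ioc 0 n, f i j
      = ∑ j ∈ Ioc 0 i, f i j + ∑ j ∈ Ioc i n, f i j := by
    intro i hi
    rw [mem_Ioc] at hi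
    have hd : Disjoint (Ioc 0 i) (Ioc i n) := by
      rw [Finset.disjoint_left]
      intro a ha hb
      rw [mem_Ioc] at ha hb
      omega
    rw [← Finset.sum_union hd, Finset.Ioc_union_Ioc_eq_Ioc (Nat.zero_le i) hi.2]
  rw [Finset.sum_congr rfl hsplit, Finset.sum_add_distrib]
  have hswap : ∑ i ∈ Ioc 0 n, ∑ j ∈ Ioc 0 i, f i j
      = ∑ j ∈ Ioc 0 n, ∑ i ∈ Icc j n, f i j := by
    apply Finset.sum_comm'
    intro i j
    simp only [mem_Ioc, mem_Icc]
    omega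
  have hdiag : ∀ j ∈ Ioc 0 n, ∑ i ∈ Icc j n, f i j = f j j + ∑ i ∈ Ioc j n, f j i := by
    intro j hj
    rw [mem_Ioc] at hj
    rw [Finset.Icc_eq_cons_Ioc hj.2, Finset.sum_cons]
    congr 1
    exact Finset.sum_congr rfl fun i _ => hf i j
  rw [hswap, Finset.sum_congr rfl hdiag, Finset.sum_add_distrib]
  ring

lemma PZ {Ω : Type*} [MeasurableSpace Ω] (μ : Measure Ω)
    (A : ℕ → Set Ω) (hA : ∀ n, MeasurableSet (A n)) (c : ℕ → ℝ≥0∞) (s : Finset ℕ) :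
    (∑ k ∈ s, c k * μ (A k)) * (∑ k ∈ s, c k * μ (A k)) ≤
      (∑ i ∈ s, ∑ j ∈ s, c i * c j * μ (A i ∩ A j)) * μ (⋃ k ∈ s, A k) := by
  classical
  set g : Ω → ℝ≥0∞ := fun ω => ∑ k ∈ s, (A k).indicator (fun _ => c k) ω with hgdef
  have hgm : Measurable g := by
    apply Finset.measurable_sum
    intro k _
    exact measurable_const.indicator (hA k)
  have h1 : ∫⁻ ω, g ω ∂μ = ∑ k ∈ s, c k * μ (A k) := by
    rw [lintegral_finset_sum _ fun k _ => measurable_const.indicator (hA k)]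
    refine Finset.sum_congr rfl fun k _ => ?_
    rw [lintegral_indicator (hA k) _, setLIntegral_const]
  have h2 : ∫⁻ ω, (g ω) * (g ω) ∂μ
      = ∑ i ∈ s, ∑ j ∈ s, c i * c j * μ (A i ∩ A j) := by
    have hexp : ∀ ω, g ω * g ω
        = ∑ i ∈ s, ∑ j ∈ s, (A i ∩ A j).indicator (fun _ => c i * c j) ω := by
      intro ω
      rw [hgdef]
      rw [Finset.sum_mul_sum]
      refine Finset.sum_congr rfl fun i _ => Finset.sum_congr rfl fun j _ => ?_
      exact (Set.inter_indicator_mul _ _ _).symm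
    simp only [hexp]
    rw [lintegral_finset_sum _ fun i _ => Finset.measurable_sum _
      fun j _ => measurable_const.indicator ((hA i).inter (hA j))]
    refine Finset.sum_congr rfl fun i _ => ?_
    rw [lintegral_finset_sum _ fun j _ => measurable_const.indicator ((hA i).inter (hA j))]
    refine Finset.sum_congr rfl fun j _ => ?_
    rw [lintegral_indicator ((hA i).inter (hA j)) _, setLIntegral_const]
  set U : Set Ω := ⋃ k ∈ s, A k with hUdef
  have hUm : MeasurableSet U := MeasurableSet.biUnion s.countable_toSet fun k _ => hA k
  have hgU : ∀ ω, g ω = g ω * U.indicator (fun _ => (1:ℝ≥0∞)) ω := by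
    intro ω
    by_cases hω : ω ∈ U
    · rw [Set.indicator_of_mem hω, mul_one]
    · rw [Set.indicator_of_notMem hω, mul_zero, hgdef]
      refine Finset.sum_eq_zero fun k hk => ?_
      apply Set.indicator_of_notMem
      intro hmem
      exact hω (Set.mem_biUnion hk hmem)
  have hCS := ENNReal.lintegral_mul_le_Lp_mul_Lq μ (p := 2) (q := 2) Real.HolderConjugate.two_two
    hgm.aemeasurable ((measurable_const.indicator hUm).aemeasurable
      (μ := μ) (f := U.indicator (fun _ => (1:ℝ≥0∞))))
  have hsq : ∀ x : ℝ≥0∞, x ^ (2:ℝ) = x * x := by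
    intro x
    rw [show (2:ℝ) = ((2:ℕ):ℝ) by norm_num, ENNReal.rpow_natCast, pow_two]
  have hl : ∫⁻ a, (g * U.indicator (fun _ => (1:ℝ≥0∞))) a ∂μ = ∫⁻ ω, g ω ∂μ := by
    refine lintegral_congr fun a => ?_
    exact (hgU a).symm
  have hu2 : ∀ a, (U.indicator (fun _ => (1:ℝ≥0∞)) a) ^ (2:ℝ)
      = U.indicator (fun _ => (1:ℝ≥0∞)) a := by
    intro a
    by_cases ha : a ∈ U
    · rw [Set.indicator_of_mem ha, ENNReal.one_rpow]
    · rw [Set.indicator_of_notMem ha, ENNReal.zero_rpow_of_pos (by norm_num)]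
  rw [hl, h1] at hCS
  simp only [hu2] at hCS
  simp only [hsq] at hCS
  rw [h2] at hCS
  have hlu : ∫⁻ a, U.indicator (fun _ => (1:ℝ≥0∞)) a ∂μ = μ U := by
    rw [lintegral_indicator hUm, setLIntegral_const, one_mul]
  rw [hlu] at hCS
  calc (∑ k ∈ s, c k * μ (A k)) * (∑ k ∈ s, c k * μ (A k))
      ≤ ((∑ i ∈ s, ∑ j ∈ s, c i * c j * μ (A i ∩ A j)) ^ (1/2:ℝ) * μ U ^ (1/2:ℝ)) *
        ((∑ i ∈ s, ∑ j ∈ s, c i * c j * μ (A i ∩ A j)) ^ (1/2:ℝ) * μ U ^ (1/2:ℝ)) :=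
        mul_le_mul' hCS hCS
    _ = (∑ i ∈ s, ∑ j ∈ s, c i * c j * μ (A i ∩ A j)) * μ U := by
        rw [mul_mul_mul_comm, ← ENNReal.rpow_add_of_nonneg _ _ (by norm_num) (by norm_num),
          ← ENNReal.rpow_add_of_nonneg _ _ (by norm_num) (by norm_num)]
        norm_num

lemma core_poly (P M ε Q c t : ℝ) (hP : 0 ≤ P) (hM : 0 ≤ M) (hc : 0 ≤ c) (hε : 0 < ε)
    (hQ0 : 0 ≤ Q) (hPZ : (t - c) * (t - c) ≤ Q * P)
    (ht1 : 2 * c ≤ t) (ht2 : 8 * (2 * c + (P + ε) * M) * (P + ε / 2) ≤ ε * t) :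
    t ^ 2 ≤ (P + ε) * (Q - M * t) := by
  have hβ' : (0:ℝ) < P + ε / 2 := by linarith
  have ht0 : (0:ℝ) ≤ t := by linarith
  have h1 : (t - c) * (t - c) ≤ Q * (P + ε / 2) := by nlinarith
  have hhalf : 0 ≤ t / 2 - c := by linarith
  have hkey : (P + ε / 2) * (t ^ 2 + (P + ε) * M * t) ≤ (P + ε) * ((t - c) * (t - c)) := by
    nlinarith [mul_le_mul_of_nonneg_right ht2 ht0,
      mul_nonneg (mul_nonneg hε.le hhalf) (show 0 ≤ 3 * t / 2 - c by linarith),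
      mul_nonneg hβ'.le (mul_nonneg hc hc), mul_nonneg hc ht0]
  have h2 : (P + ε) * ((t - c) * (t - c)) ≤ (P + ε / 2) * ((P + ε) * Q) := by
    have := mul_le_mul_of_nonneg_left h1 (show (0:ℝ) ≤ P + ε by linarith)
    nlinarith [this]
  have h3 : t ^ 2 + (P + ε) * M * t ≤ (P + ε) * Q :=
    le_of_mul_le_mul_left (le_trans hkey h2) hβ'
  nlinarith [h3]

/-- For a bounded sequence of nonnegative weights `w_n` with
`∑ w_n P(A_n) = ∞`, one has
`P(limsup A_n) ≥ limsup_n (∑_{i<j≤n} w_i w_j P(A_i) P(A_j)) / (∑_{i<j≤n} w_i w_j P(A_i ∩ A_j))`. -/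
theorem borel_cantelli_offdiagonal
    {Ω : Type*} [MeasurableSpace Ω] (μ : Measure Ω) [IsProbabilityMeasure μ]
    (A : ℕ → Set Ω) (hA : ∀ n, MeasurableSet (A n)) (w : ℕ → ℝ)
    (hw0 : ∀ n, 0 ≤ w n) (hwbdd : ∃ M : ℝ, ∀ n, w n ≤ M)
    (hdiv : Tendsto (fun m => ∑ n ∈ Finset.Icc 1 m, w n * (μ (A n)).toReal)
      atTop atTop) :
    (μ (limsup A atTop)).toReal ≥
      limsup (fun n =>
        (∑ i ∈ Finset.Icc 1 n, ∑ j ∈ Finset.Ioc i n,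
            w i * w j * ((μ (A i)).toReal * (μ (A j)).toReal)) /
          ∑ i ∈ Finset.Icc 1 n, ∑ j ∈ Finset.Ioc i n,
            w i * w j * (μ (A i ∩ A j)).toReal) atTop := by
  classical
  obtain ⟨M₀, hM₀⟩ := hwbdd
  set M : ℝ := max M₀ 0 with hMdef
  have hM : ∀ n, w n ≤ M := fun n => le_trans (hM₀ n) (le_max_left _ _)
  have hM0 : (0:ℝ) ≤ M := le_max_right _ _
  have hIcc : ∀ n : ℕ, Icc 1 n = Ioc 0 n := by
    intro n
    ext x
    simp only [mem_Icc, mem_Ioc]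
    omega
  set p : ℕ → ℝ := fun k => (μ (A k)).toReal with hp
  set q : ℕ → ℕ → ℝ := fun i j => (μ (A i ∩ A j)).toReal with hq
  have hp0 : ∀ k, 0 ≤ p k := fun k => ENNReal.toReal_nonneg
  have hq0 : ∀ i j, 0 ≤ q i j := fun i j => ENNReal.toReal_nonneg
  have hqsymm : ∀ i j, q i j = q j i := fun i j => by
    simp only [hq, Set.inter_comm]
  have hqdiag : ∀ i, q i i = p i := fun i => by
    simp only [hq, hp, Set.inter_self]
  set S : ℕ → ℝ := fun n => ∑ k ∈ Icc 1 n, w k * p k with hS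
  have hS0 : ∀ n, 0 ≤ S n := fun n =>
    Finset.sum_nonneg fun k _ => mul_nonneg (hw0 k) (hp0 k)
  set Num : ℕ → ℝ := fun n => ∑ i ∈ Icc 1 n, ∑ j ∈ Ioc i n, w i * w j * (p i * p j)
    with hNumdef
  set Den : ℕ → ℝ := fun n => ∑ i ∈ Icc 1 n, ∑ j ∈ Ioc i n, w i * w j * q i j
    with hDendef
  have hNum0 : ∀ n, 0 ≤ Num n := fun n =>
    Finset.sum_nonneg fun i _ => Finset.sum_nonneg fun j _ =>
      mul_nonneg (mul_nonneg (hw0 i) (hw0 j)) (mul_nonneg (hp0 i) (hp0 j))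
  have hDen0 : ∀ n, 0 ≤ Den n := fun n =>
    Finset.sum_nonneg fun i _ => Finset.sum_nonneg fun j _ =>
      mul_nonneg (mul_nonneg (hw0 i) (hw0 j)) (hq0 i j)
  -- the sets C m
  set C : ℕ → Set Ω := fun m => ⋃ k, ⋃ (_ : m ≤ k), A k with hC
  have hCm : ∀ m, MeasurableSet (C m) := fun m =>
    MeasurableSet.iUnion fun k => MeasurableSet.iUnion fun _ => hA k
  have hCanti : Antitone C := by
    intro a b hab
    exact Set.biUnion_subset_biUnion_left fun k (hk : b ≤ k) => le_trans hab hk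
  have hCiInter : limsup A atTop = ⋂ m, C m := by
    rw [limsup_eq_iInf_iSup_of_nat]
    simp only [hC, ge_iff_le, Set.iInf_eq_iInter, Set.iSup_eq_iUnion]
  have hTend : Tendsto (fun m => μ (C m)) atTop (𝓝 (μ (limsup A atTop))) := by
    rw [hCiInter]
    exact tendsto_measure_iInter_atTop (fun i => (hCm i).nullMeasurableSet) hCanti
      ⟨0, measure_ne_top μ _⟩
  -- real Paley-Zygmund
  have hrealPZ : ∀ m n : ℕ,
      (∑ k ∈ Ioc m n, w k * p k) * (∑ k ∈ Ioc m n, w k * p k) ≤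
        (∑ i ∈ Ioc m n, ∑ j ∈ Ioc m n, w i * w j * q i j) * (μ (C m)).toReal := by
    intro m n
    have h := PZ μ A hA (fun k => ENNReal.ofReal (w k)) (Ioc m n)
    have hUC : μ (⋃ k ∈ Ioc m n, A k) ≤ μ (C m) := by
      apply measure_mono
      refine Set.iUnion₂_subset fun k hk => ?_
      rw [mem_Ioc] at hk
      exact Set.subset_biUnion_of_mem (u := fun k => A k) (hk.1.le : m ≤ k)
    have h' := le_trans h (mul_le_mul_right hUC _)
    have hfin : (∑ i ∈ Ioc m n, ∑ j ∈ Ioc m n,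
        ENNReal.ofReal (w i) * ENNReal.ofReal (w j) * μ (A i ∩ A j)) * μ (C m) ≠ ∞ := by
      apply ENNReal.mul_ne_top _ (measure_ne_top μ _)
      refine (ENNReal.sum_lt_top.2 fun i _ => ENNReal.sum_lt_top.2 fun j _ => ?_).ne
      exact ENNReal.mul_lt_top (ENNReal.mul_lt_top ENNReal.ofReal_lt_top
        ENNReal.ofReal_lt_top) (measure_lt_top μ _)
    have h2 := ENNReal.toReal_mono hfin h'
    rw [ENNReal.toReal_mul, ENNReal.toReal_mul] at h2
    have hsum1 : (∑ k ∈ Ioc m n, ENNReal.ofReal (w k) * μ (A k)).toReal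
        = ∑ k ∈ Ioc m n, w k * p k := by
      rw [ENNReal.toReal_sum fun k _ => ENNReal.mul_ne_top ENNReal.ofReal_ne_top
        (measure_ne_top μ _)]
      exact Finset.sum_congr rfl fun k _ => by
        rw [ENNReal.toReal_mul, ENNReal.toReal_ofReal (hw0 k)]
    have hsum2 : (∑ i ∈ Ioc m n, ∑ j ∈ Ioc m n,
        ENNReal.ofReal (w i) * ENNReal.ofReal (w j) * μ (A i ∩ A j)).toReal
        = ∑ i ∈ Ioc m n, ∑ j ∈ Ioc m n, w i * w j * q i j := by
      rw [ENNReal.toReal_sum fun i _ => (ENNReal.sum_lt_top.2 fun j _ =>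
        ENNReal.mul_lt_top (ENNReal.mul_lt_top ENNReal.ofReal_lt_top
          ENNReal.ofReal_lt_top) (measure_lt_top μ _)).ne]
      refine Finset.sum_congr rfl fun i _ => ?_
      rw [ENNReal.toReal_sum fun j _ => (ENNReal.mul_lt_top (ENNReal.mul_lt_top
        ENNReal.ofReal_lt_top ENNReal.ofReal_lt_top) (measure_lt_top μ _)).ne]
      exact Finset.sum_congr rfl fun j _ => by
        rw [ENNReal.toReal_mul, ENNReal.toReal_mul, ENNReal.toReal_ofReal (hw0 i),
          ENNReal.toReal_ofReal (hw0 j)]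
    rw [hsum1, hsum2] at h2
    exact h2
  -- Num n ≤ S n ^ 2 / 2  (in the form 2 * Num n ≤ S n ^ 2)
  have hNumle : ∀ n, 2 * Num n ≤ S n ^ 2 := by
    intro n
    have hexp : S n ^ 2 = ∑ i ∈ Ioc 0 n, ∑ j ∈ Ioc 0 n, w i * w j * (p i * p j) := by
      simp only [hS]
      rw [pow_two, hIcc, Finset.sum_mul_sum]
      exact Finset.sum_congr rfl fun i _ => Finset.sum_congr rfl fun j _ => by ring
    rw [hexp, dsum_split _ (fun i j => by ring) n]
    have hdiag : 0 ≤ ∑ i ∈ Ioc 0 n, w i * w i * (p i * p i) :=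
      Finset.sum_nonneg fun i _ => mul_nonneg (mul_nonneg (hw0 i) (hw0 i))
        (mul_nonneg (hp0 i) (hp0 i))
    have : Num n = ∑ i ∈ Ioc 0 n, ∑ j ∈ Ioc i n, w i * w j * (p i * p j) := by
      simp only [hNumdef, hIcc]
    rw [this]
    linarith [hdiag]
  -- (Q m n) - M * S n ≤ 2 * Den n
  have hDenge : ∀ m n : ℕ,
      (∑ i ∈ Ioc m n, ∑ j ∈ Ioc m n, w i * w j * q i j) - M * S n ≤ 2 * Den n := by
    intro m n
    have hsub : (∑ i ∈ Ioc m n, ∑ j ∈ Ioc m n, w i * w j * q i j)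
        ≤ ∑ i ∈ Ioc 0 n, ∑ j ∈ Ioc 0 n, w i * w j * q i j := by
      have hss : Ioc m n ⊆ Ioc 0 n := by
        intro x hx
        rw [mem_Ioc] at hx ⊢
        omega
      refine le_trans (Finset.sum_le_sum fun i _ =>
        Finset.sum_le_sum_of_subset_of_nonneg hss fun j _ _ =>
          mul_nonneg (mul_nonneg (hw0 i) (hw0 j)) (hq0 i j)) ?_
      exact Finset.sum_le_sum_of_subset_of_nonneg hss fun i _ _ =>
        Finset.sum_nonneg fun j _ =>
          mul_nonneg (mul_nonneg (hw0 i) (hw0 j)) (hq0 i j)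
    have hsplit := dsum_split (fun i j => w i * w j * q i j) (fun i j => by
      show w i * w j * q i j = w j * w i * q j i
      rw [hqsymm i j]; ring) n
    have hdiagle : ∑ i ∈ Ioc 0 n, w i * w i * q i i ≤ M * S n := by
      simp only [hS, hIcc]
      rw [Finset.mul_sum]
      refine Finset.sum_le_sum fun i _ => ?_
      rw [hqdiag]
      have := mul_le_mul_of_nonneg_right (hM i) (mul_nonneg (hw0 i) (hp0 i))
      nlinarith [this]
    have hDenIoc : Den n = ∑ i ∈ Ioc 0 n, ∑ j ∈ Ioc i n, w i * w j * q i j := by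
      simp only [hDendef, hIcc]
    linarith [hsub, hsplit, hdiagle, hDenIoc ▸ le_refl (Den n)]
  -- main claim
  have claim : ∀ (m : ℕ) (ε : ℝ), 0 < ε →
      limsup (fun n => Num n / Den n) atTop ≤ (μ (C m)).toReal + ε := by
    intro m ε hε
    set P : ℝ := (μ (C m)).toReal with hPdef
    have hP0 : 0 ≤ P := ENNReal.toReal_nonneg
    have hcb : IsCoboundedUnder (· ≤ ·) atTop (fun n => Num n / Den n) :=
      isCoboundedUnder_le_of_le atTop (x := 0) fun n => div_nonneg (hNum0 n) (hDen0 n)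
    refine limsup_le_of_le hcb ?_
    have hc0 : 0 ≤ S m := hS0 m
    filter_upwards [hdiv.eventually_ge_atTop (2 * S m),
      hdiv.eventually_ge_atTop ((8 * (2 * S m + (P + ε) * M) * (P + ε / 2)) / ε),
      eventually_ge_atTop m] with n ht1 ht2' hnm
    have ht2 : 8 * (2 * S m + (P + ε) * M) * (P + ε / 2) ≤ ε * S n := by
      rw [div_le_iff₀ hε] at ht2'
      linarith [ht2']
    have hT : ∑ k ∈ Ioc m n, w k * p k = S n - S m := by
      have := Finset.sum_Ioc_consecutive (fun k => w k * p k)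
        (Nat.zero_le m) hnm
      simp only [hS, hIcc]
      linarith [this]
    have hPZ' : (S n - S m) * (S n - S m) ≤
        (∑ i ∈ Ioc m n, ∑ j ∈ Ioc m n, w i * w j * q i j) * P := by
      rw [← hT]
      exact hrealPZ m n
    have hQ0 : 0 ≤ ∑ i ∈ Ioc m n, ∑ j ∈ Ioc m n, w i * w j * q i j :=
      Finset.sum_nonneg fun i _ => Finset.sum_nonneg fun j _ =>
        mul_nonneg (mul_nonneg (hw0 i) (hw0 j)) (hq0 i j)
    have hcore := core_poly P M ε _ (S m) (S n) hP0 hM0 hc0 hε hQ0 hPZ' ht1 ht2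
    have hfin : Num n ≤ (P + ε) * Den n := by
      have h1 := hNumle n
      have h2 := hDenge m n
      have h3 := mul_le_mul_of_nonneg_left h2 (show (0:ℝ) ≤ P + ε by linarith)
      nlinarith [hcore, h1, h3]
    rcases (hDen0 n).eq_or_lt with hd | hd
    · rw [← hd, div_zero]
      linarith
    · rw [div_le_iff₀ hd]
      linarith [hfin]
  -- conclude
  rw [ge_iff_le]
  have hfun : (fun n =>
        (∑ i ∈ Finset.Icc 1 n, ∑ j ∈ Finset.Ioc i n,
            w i * w j * ((μ (A i)).toReal * (μ (A j)).toReal)) /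
          ∑ i ∈ Finset.Icc 1 n, ∑ j ∈ Finset.Ioc i n,
            w i * w j * (μ (A i ∩ A j)).toReal)
      = fun n => Num n / Den n := by
    funext n
    simp only [hNumdef, hDendef, hp, hq]
  rw [hfun]
  set L : ℝ := (μ (limsup A atTop)).toReal with hL
  by_contra hcon
  push_neg at hcon
  set ls := limsup (fun n => Num n / Den n) atTop with hls
  have hεpos : 0 < (ls - L) / 2 := by linarith
  -- find m with (μ (C m)).toReal ≤ L + (ls - L)/4
  have hlt : μ (limsup A atTop) < μ (limsup A atTop) + ENNReal.ofReal ((ls - L) / 4) := by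
    apply ENNReal.lt_add_right (measure_ne_top μ _)
    simp only [ne_eq, ENNReal.ofReal_eq_zero, not_le]
    linarith
  obtain ⟨m, hm⟩ := (hTend.eventually_lt_const hlt).exists
  have hmR : (μ (C m)).toReal ≤ L + (ls - L) / 4 := by
    have := ENNReal.toReal_mono (by
      exact ENNReal.add_ne_top.2 ⟨measure_ne_top μ _, ENNReal.ofReal_ne_top⟩) hm.le
    rw [ENNReal.toReal_add (measure_ne_top μ _) ENNReal.ofReal_ne_top,
      ENNReal.toReal_ofReal (by linarith)] at this
    exact this
  have hclaim := claim m ((ls - L) / 2) hεpos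

  linarith
end

section
/- Let (Ω, F, P) be a probability space, let {A_n}_{n=1}^∞ be a sequence of events, and let {w_n}_{n=1}^∞ be a bounded sequence of nonnegative real numbers with Σ_{n=1}^∞ w_n P(A_n) = ∞. Then lim_{n→∞} (Σ_{i=1}^n w_i² P(A_i)) / (Σ_{i=1}^n Σ_{j=1}^n w_i w_j P(A_i ∩ A_j)) = 0. -/
open MeasureTheory Filter Finset

lemma cs_aux {Ω : Type*} [MeasurableSpace Ω] (μ : Measure Ω) [IsProbabilityMeasure μ]
    (A : ℕ → Set Ω) (hA : ∀ n, MeasurableSet (A n)) (w : ℕ → ℝ) (n : ℕ) :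
    (∑ i ∈ Finset.Icc 1 n, w i * (μ (A i)).toReal) ^ 2 ≤
      ∑ i ∈ Finset.Icc 1 n, ∑ j ∈ Finset.Icc 1 n,
        w i * w j * (μ (A i ∩ A j)).toReal := by
  set X : Ω → ℝ := fun ω => ∑ i ∈ Finset.Icc 1 n, (A i).indicator (fun _ => w i) ω with hX
  have hmem : MemLp X 2 μ :=
    memLp_finset_sum _ fun i _ =>
      memLp_indicator_const 2 (hA i) (w i) (Or.inr (measure_ne_top μ _))
  have hint1 : ∫ ω, X ω ∂μ = ∑ i ∈ Finset.Icc 1 n, w i * (μ (A i)).toReal := by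
    rw [integral_finset_sum _ (fun i _ => (integrable_const (w i)).indicator (hA i))]
    refine Finset.sum_congr rfl fun i _ => ?_
    rw [integral_indicator_const _ (hA i)]
    simp [mul_comm, measureReal_def]
  have hsq : ∀ ω, X ω ^ 2 = ∑ i ∈ Finset.Icc 1 n, ∑ j ∈ Finset.Icc 1 n,
      (A i ∩ A j).indicator (fun _ => w i * w j) ω := by
    intro ω
    rw [sq, hX, Finset.sum_mul_sum]
    refine Finset.sum_congr rfl fun i _ => Finset.sum_congr rfl fun j _ => ?_
    exact (Set.inter_indicator_mul (fun _ => w i) (fun _ => w j) ω).symm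
  have hint2 : ∫ ω, X ω ^ 2 ∂μ = ∑ i ∈ Finset.Icc 1 n, ∑ j ∈ Finset.Icc 1 n,
      w i * w j * (μ (A i ∩ A j)).toReal := by
    simp_rw [hsq]
    rw [integral_finset_sum _ (fun i _ => integrable_finset_sum _
      (fun j _ => (integrable_const (w i * w j)).indicator ((hA i).inter (hA j))))]
    refine Finset.sum_congr rfl fun i _ => ?_
    rw [integral_finset_sum _ (fun j _ => (integrable_const (w i * w j)).indicator ((hA i).inter (hA j)))]
    refine Finset.sum_congr rfl fun j _ => ?_
    rw [integral_indicator_const _ ((hA i).inter (hA j))]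
    simp [mul_comm, measureReal_def]
  have hvar := ProbabilityTheory.variance_nonneg X μ
  rw [ProbabilityTheory.variance_eq_sub hmem] at hvar
  have : (∫ ω, X ω ∂μ) ^ 2 ≤ ∫ ω, X ω ^ 2 ∂μ := by
    simp only [Pi.pow_apply] at hvar
    linarith
  rw [hint1, hint2] at this
  exact this

/-- For a bounded sequence of nonnegative weights `w_n` with
`∑ w_n P(A_n) = ∞`, the ratio of the diagonal term `∑_{i=1}^n w_i² P(A_i)` to
the full double sum `∑_{i,j=1}^n w_i w_j P(A_i ∩ A_j)` tends to `0`. -/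
theorem diagonal_ratio_tendsto_zero
    {Ω : Type*} [MeasurableSpace Ω] (μ : Measure Ω) [IsProbabilityMeasure μ]
    (A : ℕ → Set Ω) (hA : ∀ n, MeasurableSet (A n)) (w : ℕ → ℝ)
    (hw0 : ∀ n, 0 ≤ w n) (hwbdd : ∃ M : ℝ, ∀ n, w n ≤ M)
    (hdiv : Tendsto (fun m => ∑ n ∈ Finset.Icc 1 m, w n * (μ (A n)).toReal)
      atTop atTop) :
    Tendsto (fun n =>
      (∑ i ∈ Finset.Icc 1 n, w i ^ 2 * (μ (A i)).toReal) /
        ∑ i ∈ Finset.Icc 1 n, ∑ j ∈ Finset.Icc 1 n,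
          w i * w j * (μ (A i ∩ A j)).toReal) atTop (nhds 0) := by
  obtain ⟨M, hM⟩ := hwbdd
  have hM0 : 0 ≤ M := le_trans (hw0 0) (hM 0)
  set S : ℕ → ℝ := fun m => ∑ i ∈ Finset.Icc 1 m, w i * (μ (A i)).toReal with hS
  set N : ℕ → ℝ := fun m => ∑ i ∈ Finset.Icc 1 m, w i ^ 2 * (μ (A i)).toReal with hN
  set D : ℕ → ℝ := fun m => ∑ i ∈ Finset.Icc 1 m, ∑ j ∈ Finset.Icc 1 m,
      w i * w j * (μ (A i ∩ A j)).toReal with hD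
  have hNpos : ∀ m, 0 ≤ N m := fun m =>
    Finset.sum_nonneg fun i _ => mul_nonneg (sq_nonneg _) ENNReal.toReal_nonneg
  have hDpos : ∀ m, 0 ≤ D m := fun m =>
    Finset.sum_nonneg fun i _ => Finset.sum_nonneg fun j _ =>
      mul_nonneg (mul_nonneg (hw0 i) (hw0 j)) ENNReal.toReal_nonneg
  have hNle : ∀ m, N m ≤ M * S m := by
    intro m
    rw [hN, hS, Finset.mul_sum]
    refine Finset.sum_le_sum fun i _ => ?_
    rw [sq]
    have : w i * w i ≤ M * w i := mul_le_mul_of_nonneg_right (hM i) (hw0 i)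
    calc w i * w i * (μ (A i)).toReal ≤ M * w i * (μ (A i)).toReal :=
          mul_le_mul_of_nonneg_right this ENNReal.toReal_nonneg
      _ = M * (w i * (μ (A i)).toReal) := by ring
  have hcs : ∀ m, S m ^ 2 ≤ D m := fun m => cs_aux μ A hA w m
  have hSbig : ∀ᶠ m in atTop, 1 ≤ S m := hdiv.eventually_ge_atTop 1
  show Tendsto (fun m => N m / D m) atTop (nhds 0)
  refine squeeze_zero' (g := fun m => M / S m) ?_ ?_ ?_
  · filter_upwards with m
    exact div_nonneg (hNpos m) (hDpos m)
  · filter_upwards [hSbig] with m hm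
    have hS0 : 0 < S m := lt_of_lt_of_le one_pos hm
    have hS2 : 0 < S m ^ 2 := by positivity
    calc N m / D m ≤ (M * S m) / (S m ^ 2) :=
          div_le_div₀ (mul_nonneg hM0 hS0.le) (hNle m) hS2 (hcs m)
      _ = M / S m := by field_simp
  · exact Tendsto.div_atTop tendsto_const_nhds hdiv
end

section
/- Let (Ω, F, P) be a probability space and let {A_n}_{n=1}^∞ be a sequence of events with Σ_{n=1}^∞ P(A_n) = ∞. Then P(limsup_n A_n) ≥ limsup_{n→∞} (Σ_{k=1}^n P(A_k))² / (Σ_{i=1}^n Σ_{j=1}^n P(A_i ∩ A_j)). (The Erdős–Rényi theorem, the case w_n ≡ 1 of the weighted generalization.) -/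
open MeasureTheory Filter Finset
open scoped ENNReal Topology

/-- Cauchy–Schwarz key inequality in `ℝ≥0∞`:
`(∑_{k∈(m,n]} μ(A_k))² ≤ (∑∑ μ(A_i∩A_j)) · μ(⋃_{k>m} A_k)`. -/
lemma erdos_renyi_cs_key {Ω : Type*} [MeasurableSpace Ω] (μ : Measure Ω)
    (A : ℕ → Set Ω) (hA : ∀ n, MeasurableSet (A n)) (m n : ℕ) :
    (∑ k ∈ Finset.Ioc m n, μ (A k)) ^ 2 ≤
      (∑ i ∈ Finset.Ioc m n, ∑ j ∈ Finset.Ioc m n, μ (A i ∩ A j)) *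
        μ (⋃ k, ⋃ (_ : m < k), A k) := by
  set U : Set Ω := ⋃ k, ⋃ (_ : m < k), A k with hUdef
  have hU : MeasurableSet U := .iUnion fun k => .iUnion fun _ => hA k
  set F : Ω → ℝ≥0∞ := fun ω => ∑ k ∈ Finset.Ioc m n, (A k).indicator 1 ω with hFdef
  have hFm : Measurable F :=
    Finset.measurable_sum _ fun k _ => measurable_one.indicator (hA k)
  have hGm : Measurable (U.indicator (1 : Ω → ℝ≥0∞)) := measurable_one.indicator hU
  have hFint : ∫⁻ ω, F ω ∂μ = ∑ k ∈ Finset.Ioc m n, μ (A k) := by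
    rw [lintegral_finset_sum _ fun k _ => measurable_one.indicator (hA k)]
    exact Finset.sum_congr rfl fun k _ => lintegral_indicator_one (hA k)
  have hF2 : ∫⁻ ω, F ω ^ (2 : ℝ) ∂μ
      = ∑ i ∈ Finset.Ioc m n, ∑ j ∈ Finset.Ioc m n, μ (A i ∩ A j) := by
    have hpt : ∀ ω, F ω ^ (2 : ℝ)
        = ∑ i ∈ Finset.Ioc m n, ∑ j ∈ Finset.Ioc m n, (A i ∩ A j).indicator 1 ω := by
      intro ω
      rw [show ((2 : ℝ)) = ((2 : ℕ) : ℝ) by norm_num, ENNReal.rpow_natCast, sq,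
        hFdef, Finset.sum_mul_sum]
      refine Finset.sum_congr rfl fun i _ => Finset.sum_congr rfl fun j _ => ?_
      by_cases hi : ω ∈ A i <;> by_cases hj : ω ∈ A j <;>
        simp [Set.indicator_apply, hi, hj]
    simp_rw [hpt]
    rw [lintegral_finset_sum _ fun i _ =>
      Finset.measurable_sum _ fun j _ => measurable_one.indicator ((hA i).inter (hA j))]
    refine Finset.sum_congr rfl fun i _ => ?_
    rw [lintegral_finset_sum _ fun j _ => measurable_one.indicator ((hA i).inter (hA j))]
    exact Finset.sum_congr rfl fun j _ => lintegral_indicator_one ((hA i).inter (hA j))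
  have hG2 : ∫⁻ ω, (U.indicator (1 : Ω → ℝ≥0∞)) ω ^ (2 : ℝ) ∂μ = μ U := by
    have : ∀ ω, (U.indicator (1 : Ω → ℝ≥0∞)) ω ^ (2 : ℝ)
        = (U.indicator (1 : Ω → ℝ≥0∞)) ω := by
      intro ω; by_cases h : ω ∈ U <;> simp [Set.indicator_apply, h]
    simp_rw [this]
    exact lintegral_indicator_one hU
  have hFU : ∀ ω, F ω * U.indicator (1 : Ω → ℝ≥0∞) ω = F ω := by
    intro ω
    by_cases h : ω ∈ U
    · simp [Set.indicator_of_mem h]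
    · have hF0 : F ω = 0 := by
        refine Finset.sum_eq_zero fun k hk => Set.indicator_of_notMem ?_ _
        exact fun hωk => h (Set.mem_iUnion.2 ⟨k, Set.mem_iUnion.2
          ⟨(Finset.mem_Ioc.1 hk).1, hωk⟩⟩)
      simp [hF0, Set.indicator_of_notMem h]
  have hconj : (2 : ℝ).HolderConjugate 2 := Real.HolderConjugate.two_two
  have key := ENNReal.lintegral_mul_le_Lp_mul_Lq μ hconj hFm.aemeasurable hGm.aemeasurable
  simp only [Pi.mul_apply, hFU] at key
  rw [hFint, hF2, hG2] at key
  calc (∑ k ∈ Finset.Ioc m n, μ (A k)) ^ 2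
      ≤ ((∑ i ∈ Finset.Ioc m n, ∑ j ∈ Finset.Ioc m n, μ (A i ∩ A j)) ^ (1 / (2:ℝ))
          * μ U ^ (1 / (2:ℝ))) ^ 2 := pow_le_pow_left₀ (zero_le) key 2
    _ = (∑ i ∈ Finset.Ioc m n, ∑ j ∈ Finset.Ioc m n, μ (A i ∩ A j)) * μ U := by
        rw [mul_pow, ← ENNReal.rpow_natCast (_ ^ (1 / (2:ℝ))),
          ← ENNReal.rpow_natCast (μ U ^ (1 / (2:ℝ))), ← ENNReal.rpow_mul,
          ← ENNReal.rpow_mul]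
        norm_num

/-- **Erdős–Rényi theorem.** If `∑ P(A_n) = ∞`, then
`P(limsup A_n) ≥ limsup_n (∑_{k=1}^n P(A_k))² / (∑_{i,j=1}^n P(A_i ∩ A_j))`. -/
theorem erdos_renyi_borel_cantelli
    {Ω : Type*} [MeasurableSpace Ω] (μ : Measure Ω) [IsProbabilityMeasure μ]
    (A : ℕ → Set Ω) (hA : ∀ n, MeasurableSet (A n))
    (hdiv : Tendsto (fun m => ∑ n ∈ Finset.Icc 1 m, (μ (A n)).toReal)
      atTop atTop) :
    (μ (limsup A atTop)).toReal ≥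
      limsup (fun n =>
        (∑ k ∈ Finset.Icc 1 n, (μ (A k)).toReal) ^ 2 /
          ∑ i ∈ Finset.Icc 1 n, ∑ j ∈ Finset.Icc 1 n,
            (μ (A i ∩ A j)).toReal) atTop := by
  -- notation
  set s : ℕ → ℝ := fun n => ∑ k ∈ Finset.Icc 1 n, (μ (A k)).toReal with hsdef
  set q : ℕ → ℝ := fun n => ∑ i ∈ Finset.Icc 1 n, ∑ j ∈ Finset.Icc 1 n,
    (μ (A i ∩ A j)).toReal with hqdef
  set f : ℕ → ℝ := fun n => s n ^ 2 / q n with hfdef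
  set tail : ℕ → Set Ω := fun m => ⋃ k, ⋃ (_ : m < k), A k with htaildef
  have htailmeas : ∀ m, MeasurableSet (tail m) :=
    fun m => .iUnion fun k => .iUnion fun _ => hA k
  set t : ℕ → ℝ := fun m => (μ (tail m)).toReal with htdef
  have hIcc : ∀ n : ℕ, Finset.Icc 1 n = Finset.Ioc 0 n := fun n => rfl
  have hq_nonneg : ∀ n, 0 ≤ q n := fun n =>
    Finset.sum_nonneg fun i _ => Finset.sum_nonneg fun j _ => ENNReal.toReal_nonneg
  have hf_nonneg : ∀ n, 0 ≤ f n := fun n => div_nonneg (sq_nonneg _) (hq_nonneg n)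
  have ht_nonneg : ∀ m, 0 ≤ t m := fun m => ENNReal.toReal_nonneg
  -- q n ≥ s n
  have hq_ge : ∀ n, s n ≤ q n := by
    intro n
    refine Finset.sum_le_sum fun i hi => ?_
    have := Finset.single_le_sum
      (f := fun j => (μ (A i ∩ A j)).toReal)
      (fun j _ => ENNReal.toReal_nonneg) hi
    simpa [Set.inter_self] using this
  -- main step : limsup f ≤ t m for all m
  have hmain : ∀ m, limsup f atTop ≤ t m := by
    intro m
    set c : ℝ := s m with hcdef
    have hc_nonneg : 0 ≤ c := Finset.sum_nonneg fun k _ => ENNReal.toReal_nonneg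
    -- key real inequality for n ≥ m with s n > c
    have hkey : ∀ n, m ≤ n → (s n - c) ^ 2 ≤ q n * t m := by
      intro n hmn
      have hsplit : s n = c + ∑ k ∈ Finset.Ioc m n, (μ (A k)).toReal := by
        simp only [hcdef, hsdef, hIcc]
        rw [← Finset.sum_Ioc_consecutive _ (Nat.zero_le m) hmn]
      have hTfin : ∀ k, μ (A k) ≠ ⊤ := fun k => measure_ne_top μ _
      have hkeyE := erdos_renyi_cs_key μ A hA m n
      -- convert to reals
      have hQfin : (∑ i ∈ Finset.Ioc m n, ∑ j ∈ Finset.Ioc m n, μ (A i ∩ A j)) ≠ ⊤ := by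
        refine (ENNReal.sum_lt_top.2 fun i _ => ENNReal.sum_lt_top.2 fun j _ => ?_).ne
        exact (measure_lt_top μ _)
      have hUfin : μ (tail m) ≠ ⊤ := measure_ne_top μ _
      have hreal : ((∑ k ∈ Finset.Ioc m n, μ (A k)) ^ 2).toReal ≤
          ((∑ i ∈ Finset.Ioc m n, ∑ j ∈ Finset.Ioc m n, μ (A i ∩ A j)) * μ (tail m)).toReal :=
        ENNReal.toReal_mono (by exact ENNReal.mul_ne_top hQfin hUfin) hkeyE
      rw [ENNReal.toReal_pow, ENNReal.toReal_mul, ENNReal.toReal_sum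
        (fun k _ => hTfin k)] at hreal
      have hQle : (∑ i ∈ Finset.Ioc m n, ∑ j ∈ Finset.Ioc m n, μ (A i ∩ A j)).toReal ≤ q n := by
        rw [ENNReal.toReal_sum (fun i _ => (ENNReal.sum_lt_top.2
          fun j _ => measure_lt_top μ _).ne)]
        simp_rw [ENNReal.toReal_sum (fun j _ => (measure_lt_top μ _).ne)]
        rw [hqdef]
        simp only [hIcc]
        refine Finset.sum_le_sum_of_subset_of_nonneg
          (Finset.Ioc_subset_Ioc (Nat.zero_le m) le_rfl)
          (fun i _ _ => Finset.sum_nonneg fun j _ => ENNReal.toReal_nonneg) |>.trans ?_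
        refine Finset.sum_le_sum fun i _ => ?_
        exact Finset.sum_le_sum_of_subset_of_nonneg
          (Finset.Ioc_subset_Ioc (Nat.zero_le m) le_rfl)
          (fun j _ _ => ENNReal.toReal_nonneg)
      have hsn : s n - c = ∑ k ∈ Finset.Ioc m n, (μ (A k)).toReal := by
        rw [hsplit]; ring
      rw [hsn]
      exact hreal.trans (mul_le_mul_of_nonneg_right hQle (ht_nonneg m))
    -- s n → ∞
    have hs_top : Tendsto s atTop atTop := hdiv
    have hev : ∀ᶠ n in atTop, c + 1 ≤ s n ∧ m ≤ n :=
      (hs_top.eventually_ge_atTop (c + 1)).and (eventually_ge_atTop m)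
    -- comparison function
    set g : ℕ → ℝ := fun n => (s n / (s n - c)) ^ 2 * t m with hgdef
    have hfg : ∀ᶠ n in atTop, f n ≤ g n := by
      filter_upwards [hev] with n ⟨hsc, hmn⟩
      have hsc' : c < s n := by linarith
      have hscpos : 0 < s n - c := by linarith
      have hspos : 0 < s n := by linarith [hc_nonneg]
      have hqpos : 0 < q n := lt_of_lt_of_le hspos (hq_ge n)
      have hkey' := hkey n hmn
      rw [hfdef, hgdef]
      rw [div_le_iff₀ hqpos]
      have h1 : s n ^ 2 = s n ^ 2 * ((s n - c) ^ 2 / (s n - c) ^ 2) := by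
        rw [div_self (by positivity)]; ring
      calc s n ^ 2 = s n ^ 2 * ((s n - c) ^ 2 / (s n - c) ^ 2) := h1
        _ ≤ s n ^ 2 * ((q n * t m) / (s n - c) ^ 2) := by gcongr
        _ = (s n / (s n - c)) ^ 2 * t m * q n := by field_simp
    -- g → t m
    have hg_tendsto : Tendsto g atTop (𝓝 (t m)) := by
      have hdiff : Tendsto (fun n => s n - c) atTop atTop :=
        tendsto_atTop_add_const_right _ (-c) hs_top
      have hratio : Tendsto (fun n => s n / (s n - c)) atTop (𝓝 1) := by
        have h0 : Tendsto (fun n => c / (s n - c)) atTop (𝓝 0) :=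
          Tendsto.div_atTop tendsto_const_nhds hdiff
        have h1 : Tendsto (fun n => 1 + c / (s n - c)) atTop (𝓝 1) := by
          simpa using (tendsto_const_nhds (x := (1:ℝ)) (f := atTop)).add h0
        refine h1.congr' ?_
        filter_upwards [hdiff.eventually_gt_atTop 0] with n hn
        field_simp
        ring
      have : Tendsto g atTop (𝓝 (1 ^ 2 * t m)) := (hratio.pow 2).mul_const (t m)
      simpa using this
    have hbdd : IsBoundedUnder (· ≥ ·) atTop f :=
      isBoundedUnder_of ⟨0, fun n => hf_nonneg n⟩
    have hcobdd : IsCoboundedUnder (· ≤ ·) atTop f := hbdd.isCoboundedUnder_le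
    calc limsup f atTop ≤ limsup g atTop :=
          limsup_le_limsup hfg hcobdd hg_tendsto.isBoundedUnder_le
      _ = t m := hg_tendsto.limsup_eq
  -- t m → μ(limsup A)
  have hInter : (⋂ m, tail m) = limsup A atTop := by
    rw [Filter.limsup_eq_iInf_iSup_of_nat]
    ext ω
    simp only [Set.iInf_eq_iInter, Set.iSup_eq_iUnion, Set.mem_iInter, Set.mem_iUnion, htaildef]
    constructor
    · intro h n
      obtain ⟨k, hk, hωk⟩ := h n
      exact ⟨k, hk.le, hωk⟩
    · intro h m
      obtain ⟨k, hk, hωk⟩ := h (m + 1)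
      exact ⟨k, by omega, hωk⟩
  have htendsto : Tendsto t atTop (𝓝 ((μ (limsup A atTop)).toReal)) := by
    have h1 : Tendsto (μ ∘ tail) atTop (𝓝 (μ (⋂ m, tail m))) :=
      tendsto_measure_iInter_atTop (fun m => (htailmeas m).nullMeasurableSet)
        (fun i j hij => Set.iUnion₂_subset fun k hk =>
          Set.subset_iUnion₂ (s := fun k _ => A k) k (lt_of_le_of_lt hij hk))
        ⟨0, measure_ne_top μ _⟩
    rw [hInter] at h1
    exact (ENNReal.tendsto_toReal (measure_ne_top μ _)).comp h1
  exact ge_of_tendsto htendsto (Eventually.of_forall hmain)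
end
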